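/- arXiv:2111.11308 — 17 statements merged into one kernel-verified Lean document; each statement's English description precedes it below -/
import Mathlib

section
/- For every a > 0 and b ∈ ℝ, the function f : ℝ → ℝ defined by f(y) = a − y·tanh((y − b)/a) has exactly two zeros y⁻ < y⁺; moreover f(y) > 0 for every y ∈ (y⁻, y⁺) and f(y) < 0 for every y with y < y⁻ or y > y⁺. -/
open Real

/-- Helper: if `u ≥ 3` and `M ≥ 3a` with `a > 0`, then `a·cosh u - M·sinh u < 0`. -/
lemma catenary_aux_neg (a u M : ℝ) (ha : 0 < a) (hu : 3 ≤ u) (hM : 3 * a ≤ M) :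
    a * Real.cosh u - M * Real.sinh u < 0 := by
  have hu0 : 0 < u := by linarith
  have hs1 : (1 : ℝ) ≤ Real.sinh u := by
    have := Real.self_lt_sinh_iff.2 hu0
    linarith
  have hcs : Real.cosh u ≤ Real.sinh u + 1 := by
    have h1 : Real.cosh u - Real.sinh u = Real.exp (-u) := Real.cosh_sub_sinh u
    have h2 : Real.exp (-u) ≤ 1 := Real.exp_le_one_iff.2 (by linarith)
    linarith
  have h3 : a * Real.cosh u ≤ a * Real.sinh u + a := by nlinarith
  have h4 : a * Real.sinh u + a ≤ 2 * a * Real.sinh u := by nlinarith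
  have h5 : 2 * a * Real.sinh u < M * Real.sinh u := by nlinarith
  linarith

/-- For every `a > 0` and `b ∈ ℝ`, the function `f(y) = a − y·tanh((y − b)/a)` has exactly
two zeros `ym < yp`; moreover `f > 0` on `(ym, yp)` and `f < 0` outside `[ym, yp]`. -/
theorem catenary_position_normal_two_zeros (a b : ℝ) (ha : 0 < a) :
    ∃ ym yp : ℝ, ym < yp ∧
      a - ym * Real.tanh ((ym - b) / a) = 0 ∧
      a - yp * Real.tanh ((yp - b) / a) = 0 ∧
      (∀ y : ℝ, a - y * Real.tanh ((y - b) / a) = 0 → y = ym ∨ y = yp) ∧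
      (∀ y : ℝ, ym < y → y < yp → 0 < a - y * Real.tanh ((y - b) / a)) ∧
      (∀ y : ℝ, y < ym ∨ yp < y → a - y * Real.tanh ((y - b) / a) < 0) := by
  have ha' : a ≠ 0 := ne_of_gt ha
  set F : ℝ → ℝ := fun y => a * Real.cosh ((y - b) / a) - y * Real.sinh ((y - b) / a) with hFdef
  -- f = F / cosh, so they have the same sign
  have hf_eq : ∀ y : ℝ, a - y * Real.tanh ((y - b) / a) = F y / Real.cosh ((y - b) / a) := by
    intro y
    have hc : Real.cosh ((y - b) / a) ≠ 0 := ne_of_gt (Real.cosh_pos _)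
    rw [Real.tanh_eq_sinh_div_cosh]
    field_simp [hFdef]
    rfl
  have hfpos : ∀ y : ℝ, 0 < F y → 0 < a - y * Real.tanh ((y - b) / a) := by
    intro y hy
    rw [hf_eq y]
    exact div_pos hy (Real.cosh_pos _)
  have hfneg : ∀ y : ℝ, F y < 0 → a - y * Real.tanh ((y - b) / a) < 0 := by
    intro y hy
    rw [hf_eq y]
    exact div_neg_of_neg_of_pos hy (Real.cosh_pos _)
  have hfzero : ∀ y : ℝ, F y = 0 → a - y * Real.tanh ((y - b) / a) = 0 := by
    intro y hy; rw [hf_eq y, hy, zero_div]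
  have hzerof : ∀ y : ℝ, a - y * Real.tanh ((y - b) / a) = 0 → F y = 0 := by
    intro y hy
    rw [hf_eq y] at hy
    exact (div_eq_zero_iff.1 hy).resolve_right (ne_of_gt (Real.cosh_pos _))
  -- derivative of F
  have hderiv : ∀ y : ℝ, HasDerivAt F (-(y / a) * Real.cosh ((y - b) / a)) y := by
    intro y
    have hu : HasDerivAt (fun y : ℝ => (y - b) / a) (1 / a) y := by
      simpa using ((hasDerivAt_id y).sub_const b).div_const a
    have h1 : HasDerivAt (fun y : ℝ => a * Real.cosh ((y - b) / a))
        (a * (Real.sinh ((y - b) / a) * (1 / a))) y :=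
      (((Real.hasDerivAt_cosh _).comp y hu)).const_mul a
    have h2 : HasDerivAt (fun y : ℝ => y * Real.sinh ((y - b) / a))
        (1 * Real.sinh ((y - b) / a) + y * (Real.cosh ((y - b) / a) * (1 / a))) y :=
      (hasDerivAt_id y).mul ((Real.hasDerivAt_sinh _).comp y hu)
    have := h1.sub h2
    refine this.congr_deriv ?_
    linear_combination (Real.sinh ((y - b) / a)) * mul_one_div_cancel ha'
  have hderiv' : ∀ y : ℝ, deriv F y = -(y / a) * Real.cosh ((y - b) / a) :=
    fun y => (hderiv y).deriv
  have hcont : Continuous F := by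
    have : ∀ y, HasDerivAt F (-(y / a) * Real.cosh ((y - b) / a)) y := hderiv
    exact continuous_iff_continuousAt.2 fun y => (this y).continuousAt
  -- strict monotonicity on Iic 0, strict antitonicity on Ici 0
  have hmono : StrictMonoOn F (Set.Iic 0) := by
    apply strictMonoOn_of_deriv_pos (convex_Iic 0) hcont.continuousOn
    intro x hx
    rw [interior_Iic] at hx
    rw [hderiv']
    have : 0 < -(x / a) := by
      have : x / a < 0 := div_neg_of_neg_of_pos hx ha
      linarith
    exact mul_pos this (Real.cosh_pos _)
  have hanti : StrictAntiOn F (Set.Ici 0) := by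
    apply strictAntiOn_of_deriv_neg (convex_Ici 0) hcont.continuousOn
    intro x hx
    rw [interior_Ici] at hx
    rw [hderiv']
    have h1 : -(x / a) < 0 := by
      have : 0 < x / a := div_pos hx ha
      linarith
    exact mul_neg_of_neg_of_pos h1 (Real.cosh_pos _)
  -- F 0 > 0
  have hF0 : 0 < F 0 := by
    have : F 0 = a * Real.cosh ((0 - b) / a) := by simp [hFdef]
    rw [this]
    exact mul_pos ha (Real.cosh_pos _)
  -- endpoints where F < 0
  set P : ℝ := max b 0 + 3 * a with hPdef
  set N : ℝ := min b 0 - 3 * a with hNdef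
  have hP0 : 0 < P := by
    have := le_max_right b 0; simp only [hPdef]; nlinarith
  have hN0 : N < 0 := by
    have := min_le_right b 0; simp only [hNdef]; nlinarith
  have hFP : F P < 0 := by
    have hu : 3 ≤ (P - b) / a := by
      rw [le_div_iff₀ ha]
      have := le_max_left b 0
      simp only [hPdef]; nlinarith
    have hM : 3 * a ≤ P := by
      have := le_max_right b 0
      simp only [hPdef]; nlinarith
    exact catenary_aux_neg a _ P ha hu hM
  have hFN : F N < 0 := by
    have hu : 3 ≤ -((N - b) / a) := by
      rw [← neg_div, le_div_iff₀ ha]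
      have := min_le_left b 0
      simp only [hNdef]; nlinarith
    have hM : 3 * a ≤ -N := by
      have := min_le_right b 0
      simp only [hNdef]; nlinarith
    have : F N = a * Real.cosh (-((N - b) / a)) - (-N) * Real.sinh (-((N - b) / a)) := by
      simp [hFdef, Real.cosh_neg, Real.sinh_neg]
    rw [this]
    exact catenary_aux_neg a _ (-N) ha hu hM
  -- zeros via IVT
  obtain ⟨yp, hypmem, hypzero⟩ : ∃ yp ∈ Set.Icc 0 P, F yp = 0 := by
    have h := intermediate_value_Icc' (le_of_lt hP0) hcont.continuousOn
      (show (0:ℝ) ∈ Set.Icc (F P) (F 0) from ⟨le_of_lt hFP, le_of_lt hF0⟩)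
    obtain ⟨y, hy, hy0⟩ := h
    exact ⟨y, hy, hy0⟩
  obtain ⟨ym, hymmem, hymzero⟩ : ∃ ym ∈ Set.Icc N 0, F ym = 0 := by
    have h := intermediate_value_Icc (le_of_lt hN0) hcont.continuousOn
      (show (0:ℝ) ∈ Set.Icc (F N) (F 0) from ⟨le_of_lt hFN, le_of_lt hF0⟩)
    obtain ⟨y, hy, hy0⟩ := h
    exact ⟨y, hy, hy0⟩
  have hym0 : ym < 0 := by
    rcases lt_or_eq_of_le hymmem.2 with h | h
    · exact h
    · exact absurd (h ▸ hymzero) (ne_of_gt hF0)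
  have hyp0 : 0 < yp := by
    rcases lt_or_eq_of_le hypmem.1 with h | h
    · exact h
    · exact absurd (h ▸ hypzero) (ne_of_gt hF0)
  -- uniqueness of zeros
  have huniq : ∀ y : ℝ, F y = 0 → y = ym ∨ y = yp := by
    intro y hy
    rcases le_or_gt y 0 with h | h
    · left
      rcases lt_trichotomy y ym with h1 | h1 | h1
      · have := hmono h (le_of_lt hym0) h1
        rw [hy, hymzero] at this; exact absurd this (lt_irrefl 0)
      · exact h1
      · have := hmono (le_of_lt hym0) h h1
        rw [hy, hymzero] at this; exact absurd this (lt_irrefl 0)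
    · right
      rcases lt_trichotomy y yp with h1 | h1 | h1
      · have := hanti (le_of_lt h) (le_of_lt hyp0) h1
        rw [hy, hypzero] at this; exact absurd this (lt_irrefl 0)
      · exact h1
      · have := hanti (le_of_lt hyp0) (le_of_lt h) h1
        rw [hy, hypzero] at this; exact absurd this (lt_irrefl 0)
  refine ⟨ym, yp, lt_trans hym0 hyp0, hfzero ym hymzero, hfzero yp hypzero, ?_, ?_, ?_⟩
  · intro y hy
    exact huniq y (hzerof y hy)
  · intro y hy1 hy2
    apply hfpos
    rcases le_or_gt y 0 with h | h
    · have := hmono hymmem.2 h hy1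
      rw [hymzero] at this; exact this
    · have := hanti (le_of_lt h) hypmem.1 hy2
      rw [hypzero] at this; exact this
  · intro y hy
    apply hfneg
    rcases hy with h | h
    · have := hmono (le_of_lt (lt_trans h hym0)) hymmem.2 h
      rw [hymzero] at this; exact this
    · have := hanti hypmem.1 (le_of_lt (lt_trans hyp0 h)) h
      rw [hypzero] at this; exact this
end

section
/- Let a > 0, b ∈ ℝ, β ∈ (0, π) and γ ∈ (0, π). If a·cosh((cos β − b)/a) = sin β and sinh((cos β − b)/a) = −cot γ, then a = sin β · sin γ and a − cos β · tanh((cos β − b)/a) = cos(γ − β). In particular, if the catenary meets the unit circle at latitude β with inward angle α (so γ = α + β), then a = sin β·sin(α + β) and X·ν at the meeting point equals cos α; if it meets the unit circle at latitude β with outward angle α (so γ = β − α), then a = sin β·sin(β − α) and X·ν at the meeting point equals cos α. -/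
open Real

/-- If the catenary `x = a·cosh((y − b)/a)` meets the unit circle at latitude `β` with
slope angle `γ` (so `sinh((cos β − b)/a) = −cot γ`), then `a = sin β · sin γ` and the
inner product `X·ν = a − cos β · tanh((cos β − b)/a)` equals `cos (γ − β)`. -/
theorem catenary_circle_meeting_formulas (a b β γ : ℝ) (ha : 0 < a)
    (hβ : β ∈ Set.Ioo 0 π) (hγ : γ ∈ Set.Ioo 0 π)
    (h1 : a * Real.cosh ((Real.cos β - b) / a) = Real.sin β)
    (h2 : Real.sinh ((Real.cos β - b) / a) = -Real.cot γ) :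
    a = Real.sin β * Real.sin γ ∧
      a - Real.cos β * Real.tanh ((Real.cos β - b) / a) = Real.cos (γ - β) := by
  set t := (Real.cos β - b) / a with ht
  have hsβ : 0 < Real.sin β := Real.sin_pos_of_pos_of_lt_pi hβ.1 hβ.2
  have hsγ : 0 < Real.sin γ := Real.sin_pos_of_pos_of_lt_pi hγ.1 hγ.2
  have hcot : Real.cot γ = Real.cos γ / Real.sin γ := Real.cot_eq_cos_div_sin γ
  have hid : Real.cosh t ^ 2 - Real.sinh t ^ 2 = 1 := Real.cosh_sq_sub_sinh_sq t
  have hcosh : Real.cosh t = Real.sin β / a := by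
    field_simp
    linarith [h1]
  rw [h2, hcot] at hid
  rw [hcosh] at hid
  have h3 : Real.sin β ^ 2 * Real.sin γ ^ 2 = a ^ 2 := by
    have hpyth : Real.sin γ ^ 2 + Real.cos γ ^ 2 = 1 := Real.sin_sq_add_cos_sq γ
    field_simp at hid
    nlinarith [hid, hpyth]
  have ha' : a = Real.sin β * Real.sin γ := by
    nlinarith [mul_pos hsβ hsγ, h3]
  refine ⟨ha', ?_⟩
  have htanh : Real.tanh t = -Real.cos γ := by
    rw [Real.tanh_eq_sinh_div_cosh, h2, hcot, hcosh, ha']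
    field_simp
  rw [htanh, Real.cos_sub, ha']
  ring
end

section
/- Let a > 0, b ∈ ℝ, let J ⊆ (0, π) be an open interval, and let r : J → (0, ∞) be twice differentiable with a·cosh((r(β)·cos β − b)/a) = r(β)·sin β for all β ∈ J, and suppose the derivative of β ↦ r(β)·cos β is nonzero on J. Then the function v := −r'/r satisfies v'(β) = −cot(β)·v(β)·(v(β)² + 1) − 2·(v(β)² + 1) for all β ∈ J. -/
open Real

private lemma deriv_zero_of_eqOn_zero {f : ℝ → ℝ} {J : Set ℝ} (hJo : IsOpen J) {β : ℝ} {D : ℝ}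
    (hβ : β ∈ J) (h0 : ∀ t ∈ J, f t = 0) (hf : HasDerivAt f D β) : D = 0 := by
  have heq : f =ᶠ[nhds β] (fun _ => (0:ℝ)) := by
    filter_upwards [hJo.mem_nhds hβ] with t ht
    exact h0 t ht
  have h2 : HasDerivAt (fun _ : ℝ => (0:ℝ)) D β := (heq.hasDerivAt_iff).mp hf
  exact h2.unique (hasDerivAt_const β 0)

/-- If `r : J → (0,∞)` is a twice differentiable radial-graph parametrization of the
catenary `x = a·cosh((y − b)/a)` in polar coordinates (latitude `β` from the north pole),
and the derivative of `β ↦ r(β)·cos β` is nonzero on `J`, then `v := −r'/r` satisfies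
the polar catenary equation `v' = −cot β · v·(v² + 1) − 2·(v² + 1)` on `J`. -/
theorem polar_catenary_equation (a b : ℝ) (ha : 0 < a) (J : Set ℝ)
    (hJ : ∃ c d : ℝ, J = Set.Ioo c d) (hJsub : J ⊆ Set.Ioo 0 π)
    (r r' r'' : ℝ → ℝ)
    (hrpos : ∀ β ∈ J, 0 < r β)
    (hr : ∀ β ∈ J, HasDerivAt r (r' β) β)
    (hr' : ∀ β ∈ J, HasDerivAt r' (r'' β) β)
    (hcat : ∀ β ∈ J, a * Real.cosh ((r β * Real.cos β - b) / a) = r β * Real.sin β)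
    (hnz : ∀ β ∈ J, r' β * Real.cos β - r β * Real.sin β ≠ 0) :
    ∀ β ∈ J, HasDerivAt (fun t => -(r' t / r t))
      (-Real.cot β * (-(r' β / r β)) * ((-(r' β / r β)) ^ 2 + 1)
        - 2 * ((-(r' β / r β)) ^ 2 + 1)) β := by
  obtain ⟨c, d, rfl⟩ := hJ
  set J : Set ℝ := Set.Ioo c d with hJdef
  have hJo : IsOpen J := isOpen_Ioo
  have haz : a ≠ 0 := ne_of_gt ha
  -- derivative of the "y minus b over a" map
  have hu : ∀ t ∈ J, HasDerivAt (fun s => (r s * Real.cos s - b) / a)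
      ((r' t * Real.cos t - r t * Real.sin t) / a) t := by
    intro t ht
    have h1 : HasDerivAt (fun s => r s * Real.cos s - b)
        (r' t * Real.cos t - r t * Real.sin t) t := by
      have := ((hr t ht).mul (Real.hasDerivAt_cos t)).sub_const b
      refine this.congr_deriv ?_; ring
    exact h1.div_const a
  -- derivative of x = r sin
  have hx : ∀ t ∈ J, HasDerivAt (fun s => r s * Real.sin s)
      (r' t * Real.sin t + r t * Real.cos t) t := by
    intro t ht
    exact (hr t ht).mul (Real.hasDerivAt_sin t)
  -- first consequence: sinh(u)·y' = x' on J
  have hG0 : ∀ t ∈ J, Real.sinh ((r t * Real.cos t - b) / a)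
      * (r' t * Real.cos t - r t * Real.sin t)
      - (r' t * Real.sin t + r t * Real.cos t) = 0 := by
    intro t ht
    have hF : HasDerivAt
        (fun s => a * Real.cosh ((r s * Real.cos s - b) / a) - r s * Real.sin s)
        (a * (Real.sinh ((r t * Real.cos t - b) / a)
            * ((r' t * Real.cos t - r t * Real.sin t) / a))
          - (r' t * Real.sin t + r t * Real.cos t)) t := by
      have hcomp := (Real.hasDerivAt_cosh ((r t * Real.cos t - b) / a)).comp t (hu t ht)
      exact (hcomp.const_mul a).sub (hx t ht)
    have hF0 : ∀ s ∈ J, a * Real.cosh ((r s * Real.cos s - b) / a) - r s * Real.sin s = 0 := by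
      intro s hs; rw [hcat s hs]; ring
    have := deriv_zero_of_eqOn_zero hJo ht hF0 hF
    field_simp at this
    linarith [this]
  intro β hβ
  obtain ⟨hβ0, hβπ⟩ := hJsub hβ
  have hS : 0 < Real.sin β := Real.sin_pos_of_pos_of_lt_pi hβ0 hβπ
  have hSne : Real.sin β ≠ 0 := ne_of_gt hS
  have hR : 0 < r β := hrpos β hβ
  have hRne : r β ≠ 0 := ne_of_gt hR
  -- notation
  set R := r β with hRdef
  set R' := r' β
  set R'' := r'' β
  set S := Real.sin β
  set C := Real.cos β
  set u := (R * C - b) / a with hudef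
  set s := Real.sinh u
  set cc := Real.cosh u
  have hyd : R' * C - R * S ≠ 0 := hnz β hβ
  -- second derivative relation: differentiate G = sinh(u)·y' − x' = 0
  have hDG : cc * ((R' * C - R * S) / a) * (R' * C - R * S)
      + s * (R'' * C - R' * S - (R' * S + R * C))
      - (R'' * S + R' * C + (R' * C - R * S)) = 0 := by
    have hsinh : HasDerivAt (fun t => Real.sinh ((r t * Real.cos t - b) / a))
        (cc * ((R' * C - R * S) / a)) β :=
      by have := (Real.hasDerivAt_sinh u).comp β (hu β hβ); exact this
    have hydfun : HasDerivAt (fun t => r' t * Real.cos t - r t * Real.sin t)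
        (R'' * C - R' * S - (R' * S + R * C)) β := by
      have h1 := (hr' β hβ).mul (Real.hasDerivAt_cos β)
      have h2 := (hr β hβ).mul (Real.hasDerivAt_sin β)
      refine (h1.sub h2).congr_deriv ?_; simp [S, C]; ring
    have hxdfun : HasDerivAt (fun t => r' t * Real.sin t + r t * Real.cos t)
        (R'' * S + R' * C + (R' * C - R * S)) β := by
      have h1 := (hr' β hβ).mul (Real.hasDerivAt_sin β)
      have h2 := (hr β hβ).mul (Real.hasDerivAt_cos β)
      refine (h1.add h2).congr_deriv ?_; simp [S, C]; ring
    have hG : HasDerivAt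
        (fun t => Real.sinh ((r t * Real.cos t - b) / a)
          * (r' t * Real.cos t - r t * Real.sin t)
          - (r' t * Real.sin t + r t * Real.cos t))
        (cc * ((R' * C - R * S) / a) * (R' * C - R * S)
          + s * (R'' * C - R' * S - (R' * S + R * C))
          - (R'' * S + R' * C + (R' * C - R * S))) β :=
      ((hsinh.mul hydfun).sub hxdfun)
    exact deriv_zero_of_eqOn_zero hJo hβ hG0 hG
  have hs : s * (R' * C - R * S) = R' * S + R * C := by
    have := hG0 β hβ
    linarith [this]
  have hc : a * cc = R * S := hcat β hβ
  have hpy : cc ^ 2 - s ^ 2 = 1 := Real.cosh_sq_sub_sinh_sq u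
  have hSC : S ^ 2 + C ^ 2 = 1 := by
    have := Real.sin_sq_add_cos_sq β; simp only [S, C] at this ⊢; linarith [this]
  -- abbreviations
  set xd := R' * S + R * C with hxd
  set yd := R' * C - R * S with hyddef
  set xdd := R'' * S + R' * C + (R' * C - R * S) with hxdd
  set ydd := R'' * C - R' * S - (R' * S + R * C) with hydd2
  -- eliminate a, s, cc to get the key relation
  have hD' : cc * yd ^ 2 + a * s * ydd - a * xdd = 0 := by
    have h := hDG
    have : a * (cc * (yd / a) * yd + s * ydd - xdd) = a * 0 := by rw [h]
    field_simp at this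
    linarith [this]
  have hkey1 : cc * yd ^ 3 + a * xd * ydd = a * xdd * yd := by
    have h1 : yd * (cc * yd ^ 2 + a * s * ydd - a * xdd) = 0 := by rw [hD']; ring
    linear_combination h1 - a * ydd * hs
  have hkey2 : R * S * yd ^ 3 = a ^ 2 * (xdd * yd - xd * ydd) := by
    linear_combination a * hkey1 - yd ^ 3 * hc
  have haux : (R * S) ^ 2 * yd ^ 2 = a ^ 2 * (xd ^ 2 + yd ^ 2) := by
    have hc2 : (R * S) ^ 2 = a ^ 2 * cc ^ 2 := by rw [← hc]; ring
    have hs2 : s ^ 2 * yd ^ 2 = xd ^ 2 := by linear_combination (s * yd + xd) * hs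
    linear_combination yd ^ 2 * hc2 + a ^ 2 * yd ^ 2 * hpy + a ^ 2 * hs2
  have hsum : xd ^ 2 + yd ^ 2 = R' ^ 2 + R ^ 2 := by
    rw [hxd, hyddef]; linear_combination (R' ^ 2 + R ^ 2) * hSC
  have hRS : R * S ≠ 0 := mul_ne_zero hRne hSne
  -- key polynomial relation
  have key : yd * (R' ^ 2 + R ^ 2) = R * S * (-(R * R'') + 2 * R' ^ 2 + R ^ 2) := by
    have h1 : R * S * yd ^ 3 * (xd ^ 2 + yd ^ 2)
        = (R * S) ^ 2 * yd ^ 2 * (xdd * yd - xd * ydd) := by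
      linear_combination (xd ^ 2 + yd ^ 2) * hkey2 - (xdd * yd - xd * ydd) * haux
    have h2 : (R * S * yd ^ 2) * (yd * (xd ^ 2 + yd ^ 2))
        = (R * S * yd ^ 2) * (R * S * (xdd * yd - xd * ydd)) := by
      linear_combination h1
    have h3 : yd * (xd ^ 2 + yd ^ 2) = R * S * (xdd * yd - xd * ydd) :=
      mul_left_cancel₀ (mul_ne_zero hRS (pow_ne_zero 2 hyd)) h2
    rw [hsum] at h3
    have hcross : xdd * yd - xd * ydd = -(R * R'') + 2 * R' ^ 2 + R ^ 2 := by
      rw [hxdd, hydd2, hxd, hyddef]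
      linear_combination (-(R * R'') + 2 * R' ^ 2 + R ^ 2) * hSC
    rw [hcross] at h3
    exact h3
  -- final derivative computation
  have hv : HasDerivAt (fun t => -(r' t / r t))
      (-((R'' * R - R' * R') / R ^ 2)) β :=
    (((hr' β hβ).div (hr β hβ) hRne)).neg
  convert hv using 1
  rw [Real.cot_eq_cos_div_sin]
  show -(C / S) * (-(R' / R)) * ((-(R' / R)) ^ 2 + 1) - 2 * ((-(R' / R)) ^ 2 + 1)
      = -((R'' * R - R' * R') / R ^ 2)
  field_simp
  linear_combination key
end

section
/- Let 0 < β₀ < β₁ ≤ π/2 and let v : (β₀, β₁] → ℝ be differentiable and satisfy the polar catenary equation v'(β) = −cot(β)·v(β)·(v(β)² + 1) − 2·(v(β)² + 1) for all β ∈ (β₀, β₁]. If v(β) → +∞ as β → β₀⁺, then v is strictly decreasing on (β₀, β₁]. -/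
open Real

/-- If `v` satisfies the polar catenary equation on `(β₀, β₁]` with `β₁ ≤ π/2`, and
`v(β) → +∞` as `β → β₀⁺`, then `v` is strictly decreasing on `(β₀, β₁]`. -/
theorem polar_catenary_strictAnti (β₀ β₁ : ℝ) (h0 : 0 < β₀) (h01 : β₀ < β₁)
    (h1 : β₁ ≤ π / 2) (v : ℝ → ℝ)
    (hv : ∀ β ∈ Set.Ioc β₀ β₁,
      HasDerivWithinAt v
        (-Real.cot β * v β * (v β ^ 2 + 1) - 2 * (v β ^ 2 + 1)) (Set.Ioc β₀ β₁) β)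
    (hlim : Filter.Tendsto v (nhdsWithin β₀ (Set.Ioi β₀)) Filter.atTop) :
    StrictAntiOn v (Set.Ioc β₀ β₁) := by
  have hpi : π / 2 < π := half_lt_self Real.pi_pos
  have hsin : ∀ β ∈ Set.Ioc β₀ β₁, 0 < Real.sin β := by
    intro β hβ
    exact Real.sin_pos_of_pos_of_lt_pi (h0.trans hβ.1) (lt_of_le_of_lt (hβ.2.trans h1) hpi)
  have hcos : ∀ β ∈ Set.Ioc β₀ β₁, 0 ≤ Real.cos β := by
    intro β hβ
    apply Real.cos_nonneg_of_mem_Icc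
    constructor
    · nlinarith [Real.pi_pos, hβ.1]
    · exact hβ.2.trans h1
  set u : ℝ → ℝ := fun β => Real.cos β * v β + 2 * Real.sin β with hu_def
  have hvc : ContinuousOn v (Set.Ioc β₀ β₁) := fun β hβ => (hv β hβ).continuousWithinAt
  have huc : ContinuousOn u (Set.Ioc β₀ β₁) :=
    (Real.continuous_cos.continuousOn.mul hvc).add
      (continuous_const.mul Real.continuous_sin).continuousOn
  -- initial positivity of v near β₀
  obtain ⟨δ', hδ'mem, hδ'sub⟩ := mem_nhdsGT_iff_exists_Ioc_subset.mp
    (hlim.eventually (Filter.eventually_gt_atTop 0))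
  set δ : ℝ := min δ' β₁ with hδ_def
  have hδ0 : β₀ < δ := lt_min hδ'mem h01
  have hδ1 : δ ≤ β₁ := min_le_right _ _
  have hvpos : ∀ β ∈ Set.Ioc β₀ δ, 0 < v β := by
    intro β hβ
    exact hδ'sub ⟨hβ.1, hβ.2.trans (min_le_left _ _)⟩
  -- the main claim : u > 0 on Ioc β₀ β₁
  have hu : ∀ β ∈ Set.Ioc β₀ β₁, 0 < u β := by
    by_contra hcon
    push_neg at hcon
    obtain ⟨b, hbmem, hble⟩ := hcon
    set S : Set ℝ := {β ∈ Set.Ioc β₀ β₁ | u β ≤ 0} with hS_def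
    have hS_ne : S.Nonempty := ⟨b, hbmem, hble⟩
    have hupos_small : ∀ β ∈ Set.Ioc β₀ δ, 0 < u β := by
      intro β hβ
      have hβ' : β ∈ Set.Ioc β₀ β₁ := ⟨hβ.1, hβ.2.trans hδ1⟩
      have := hvpos β hβ
      have := hsin β hβ'
      have := hcos β hβ'
      simp only [hu_def]
      nlinarith
    have hδS : ∀ β ∈ S, δ ≤ β := by
      intro β hβ
      by_contra hlt
      push_neg at hlt
      exact absurd hβ.2 (not_le.mpr (hupos_small β ⟨hβ.1.1, hlt.le⟩))
    have hS_eq : S = Set.Icc δ β₁ ∩ u ⁻¹' Set.Iic 0 := by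
      ext β
      constructor
      · rintro ⟨hβ1, hβ2⟩
        exact ⟨⟨hδS β ⟨hβ1, hβ2⟩, hβ1.2⟩, hβ2⟩
      · rintro ⟨hβ1, hβ2⟩
        exact ⟨⟨hδ0.trans_le hβ1.1, hβ1.2⟩, hβ2⟩
    have hS_closed : IsClosed S := by
      rw [hS_eq]
      apply ContinuousOn.preimage_isClosed_of_isClosed
        (huc.mono (fun x hx => ⟨hδ0.trans_le hx.1, hx.2⟩)) isClosed_Icc isClosed_Iic
    have hS_bdd : BddBelow S := ⟨δ, hδS⟩
    set c : ℝ := sInf S with hc_def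
    have hcS : c ∈ S := hS_closed.csInf_mem hS_ne hS_bdd
    obtain ⟨hcmem, hcle0⟩ := hcS
    have hβ₀c : β₀ < c := hcmem.1
    have hcβ₁ : c ≤ β₁ := hcmem.2
    have hleft : ∀ β ∈ Set.Ioo β₀ c, 0 < u β := by
      intro β hβ
      by_contra hle
      push_neg at hle
      have : β ∈ S := ⟨⟨hβ.1, hβ.2.le.trans hcβ₁⟩, hle⟩
      exact absurd (csInf_le hS_bdd this) (not_le.mpr hβ.2)
    have hsinc : 0 < Real.sin c := hsin c hcmem
    have hcosc : 0 < Real.cos c := by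
      rcases lt_or_eq_of_le (hcos c hcmem) with h | h
      · exact h
      · exfalso
        simp only [hu_def] at hcle0
        rw [← h, zero_mul] at hcle0
        linarith
    have hvc_neg : v c < 0 := by
      simp only [hu_def] at hcle0
      nlinarith
    -- derivative of v at c is nonnegative
    set V : ℝ := -Real.cot c * v c * (v c ^ 2 + 1) - 2 * (v c ^ 2 + 1) with hV_def
    have hVnonneg : 0 ≤ V := by
      have hcot : Real.cot c = Real.cos c / Real.sin c := Real.cot_eq_cos_div_sin c
      have hA : (0:ℝ) < v c ^ 2 + 1 := by positivity
      have hVeq : V = -(v c ^ 2 + 1) * u c / Real.sin c := by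
        rw [hV_def, hcot, hu_def]
        field_simp
        ring
      rw [hVeq]
      apply div_nonneg _ hsinc.le
      nlinarith
    -- derivative of u at c
    have hDu : HasDerivWithinAt u ((-Real.sin c) * v c + Real.cos c * V + 2 * Real.cos c)
        (Set.Ioc β₀ β₁) c := by
      have h1 := (Real.hasDerivAt_cos c).hasDerivWithinAt.mul (hv c hcmem)
      have h2 : HasDerivWithinAt (fun β => 2 * Real.sin β) (2 * Real.cos c) (Set.Ioc β₀ β₁) c :=
        ((Real.hasDerivAt_sin c).hasDerivWithinAt (s := Set.Ioc β₀ β₁)).const_mul (2:ℝ)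
      exact h1.add h2
    have hDpos : 0 < (-Real.sin c) * v c + Real.cos c * V + 2 * Real.cos c := by
      nlinarith
    have hsub : Set.Ioo β₀ c ⊆ Set.Ioc β₀ β₁ := fun x hx => ⟨hx.1, hx.2.le.trans hcβ₁⟩
    have hDu' := hDu.mono hsub
    rw [hasDerivWithinAt_iff_tendsto_slope] at hDu'
    have hdiff : Set.Ioo β₀ c \ {c} = Set.Ioo β₀ c := by
      apply Set.diff_singleton_eq_self
      simp
    rw [hdiff] at hDu'
    have hNeBot : (nhdsWithin c (Set.Ioo β₀ c)).NeBot := by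
      apply mem_closure_iff_nhdsWithin_neBot.mp
      rw [closure_Ioo (ne_of_lt hβ₀c)]
      exact ⟨hβ₀c.le, le_refl c⟩
    have hev : ∀ᶠ x in nhdsWithin c (Set.Ioo β₀ c), 0 < slope u c x :=
      hDu'.eventually (eventually_gt_nhds hDpos)
    obtain ⟨x, hx_slope, hx_mem⟩ := (hev.and self_mem_nhdsWithin).exists
    have hxlt : x < c := hx_mem.2
    have hux : 0 < u x := hleft x hx_mem
    have hneg : slope u c x < 0 := by
      rw [slope_def_field]
      apply div_neg_of_pos_of_neg
      · linarith
      · linarith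
    linarith
  -- now conclude strict antitonicity
  apply strictAntiOn_of_deriv_neg (convex_Ioc β₀ β₁) hvc
  intro x hx
  rw [interior_Ioc] at hx
  have hx' : x ∈ Set.Ioc β₀ β₁ := ⟨hx.1, hx.2.le⟩
  have hda : HasDerivAt v (-Real.cot x * v x * (v x ^ 2 + 1) - 2 * (v x ^ 2 + 1)) x :=
    (hv x hx').hasDerivAt (Ioc_mem_nhds hx.1 hx.2)
  rw [hda.deriv]
  have hux := hu x hx'
  have hsx := hsin x hx'
  have hcot : Real.cot x = Real.cos x / Real.sin x := Real.cot_eq_cos_div_sin x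
  have hA : (0:ℝ) < v x ^ 2 + 1 := by positivity
  have heq : -Real.cot x * v x * (v x ^ 2 + 1) - 2 * (v x ^ 2 + 1)
      = -(v x ^ 2 + 1) * u x / Real.sin x := by
    rw [hcot, hu_def]
    field_simp
    ring
  rw [heq]
  apply div_neg_of_neg_of_pos _ hsx
  nlinarith
end

section
/- For every a > 0 and b ∈ ℝ, the function y ↦ (a·cosh((y − b)/a))² + y² is strictly convex on ℝ; consequently, for every R ∈ ℝ the set {y ∈ ℝ : (a·cosh((y − b)/a))² + y² ≤ R} is either empty, a single point, or a closed bounded interval. -/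
open Real Set

lemma expAffine_convex (k c : ℝ) : ConvexOn ℝ Set.univ (fun y : ℝ => Real.exp (k * y + c)) := by
  have h := convexOn_exp.comp_affineMap (AffineMap.lineMap c (c + k) : ℝ →ᵃ[ℝ] ℝ)
  simp only [Set.preimage_univ] at h
  refine ConvexOn.congr h (fun y _ => ?_)
  symm
  simp [AffineMap.lineMap_apply, Function.comp]
  ring_nf

lemma coshAffine_convex (k c : ℝ) : ConvexOn ℝ Set.univ (fun y : ℝ => Real.cosh (k * y + c)) := by
  have h1 := expAffine_convex k c
  have h2 := expAffine_convex (-k) (-c)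
  have h := (h1.add h2).smul (by norm_num : (0:ℝ) ≤ 1/2)
  refine ConvexOn.congr h (fun y _ => ?_)
  symm
  rw [Real.cosh_eq]
  simp only [smul_eq_mul, Pi.add_apply]
  rw [neg_mul, ← neg_add]
  ring

/-- For `a > 0`, `b ∈ ℝ`, the function `y ↦ (a·cosh((y − b)/a))² + y²` is strictly convex
on `ℝ`; consequently each sublevel set is empty, a single point, or a closed bounded
interval. -/
theorem catenary_sq_dist_strictConvex (a b : ℝ) (ha : 0 < a) :
    StrictConvexOn ℝ Set.univ
        (fun y : ℝ => (a * Real.cosh ((y - b) / a)) ^ 2 + y ^ 2) ∧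
      ∀ R : ℝ,
        {y : ℝ | (a * Real.cosh ((y - b) / a)) ^ 2 + y ^ 2 ≤ R} = ∅ ∨
        (∃ y₀ : ℝ, {y : ℝ | (a * Real.cosh ((y - b) / a)) ^ 2 + y ^ 2 ≤ R} = {y₀}) ∨
        (∃ c d : ℝ, c < d ∧
          {y : ℝ | (a * Real.cosh ((y - b) / a)) ^ 2 + y ^ 2 ≤ R} = Set.Icc c d) := by
  -- convexity of the cosh part
  have hcosh : ConvexOn ℝ Set.univ (fun y : ℝ => Real.cosh ((y - b) / a)) := by
    have h := coshAffine_convex (1/a) (-b/a)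
    convert h using 2 with y
    congr 1
    field_simp
    ring
  have hpos : ∀ y : ℝ, 0 ≤ Real.cosh ((y - b) / a) := fun y => (Real.cosh_pos _).le
  have hcc : ConvexOn ℝ Set.univ
      ((fun y : ℝ => Real.cosh ((y - b) / a)) * (fun y : ℝ => Real.cosh ((y - b) / a))) :=
    hcosh.mul hcosh (fun y _ => hpos y) (fun y _ => hpos y) (monovaryOn_self _ _)
  have hg : ConvexOn ℝ Set.univ (fun y : ℝ => (a * Real.cosh ((y - b) / a)) ^ 2) := by
    have h := hcc.smul (sq_nonneg a)
    refine ConvexOn.congr h (fun y _ => ?_)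
    symm
    simp only [Pi.mul_apply, smul_eq_mul]
    ring
  have hsq : StrictConvexOn ℝ Set.univ (fun y : ℝ => y ^ 2) :=
    Even.strictConvexOn_pow (by norm_num) (by norm_num)
  have hstrict : StrictConvexOn ℝ Set.univ
      (fun y : ℝ => (a * Real.cosh ((y - b) / a)) ^ 2 + y ^ 2) :=
    hg.add_strictConvexOn hsq
  refine ⟨hstrict, fun R => ?_⟩
  set f : ℝ → ℝ := fun y => (a * Real.cosh ((y - b) / a)) ^ 2 + y ^ 2 with hf
  set S : Set ℝ := {y | f y ≤ R} with hS
  have hconvS : Convex ℝ S := by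
    have h := hstrict.convexOn.convex_le R
    simpa [hS, Set.sep_univ] using h
  have hcont : Continuous f := by fun_prop
  have hclosed : IsClosed S := isClosed_le hcont continuous_const
  set M : ℝ := Real.sqrt (max R 0) with hM
  have hsub : S ⊆ Set.Icc (-M) M := by
    intro y hy
    have h1 : y ^ 2 ≤ max R 0 := by
      have := hy
      simp only [hS, Set.mem_setOf_eq, hf] at this
      nlinarith [sq_nonneg (a * Real.cosh ((y - b) / a)), le_max_left R 0]
    have h2 : |y| ≤ M := by
      rw [hM, ← Real.sqrt_sq_eq_abs]
      exact Real.sqrt_le_sqrt h1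
    exact abs_le.mp h2
  have hcpt : IsCompact S := isCompact_Icc.of_isClosed_subset hclosed hsub
  rcases Set.eq_empty_or_nonempty S with hE | hNE
  · exact Or.inl hE
  · obtain ⟨c, hcS, hcmin⟩ := hcpt.exists_isLeast hNE
    obtain ⟨d, hdS, hdmax⟩ := hcpt.exists_isGreatest hNE
    have hScd : S = Set.Icc c d := by
      apply Set.Subset.antisymm
      · exact fun y hy => ⟨hcmin hy, hdmax hy⟩
      · exact hconvS.ordConnected.out hcS hdS
    rcases eq_or_lt_of_le (hcmin hdS) with heq | hlt
    · exact Or.inr (Or.inl ⟨c, by rw [hScd, ← heq, Set.Icc_self]⟩)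
    · exact Or.inr (Or.inr ⟨c, d, hlt, hScd⟩)
end

section
/- Let a > 0, b ∈ ℝ, and let y₋ < y₊ be real numbers with (a·cosh((y₋ − b)/a))² + y₋² = 1 and (a·cosh((y₊ − b)/a))² + y₊² = 1. Then sgn(b) = sgn(y₋ + y₊); that is: b > 0 if and only if y₋ + y₊ > 0, b = 0 if and only if y₋ + y₊ = 0, and b < 0 if and only if y₋ + y₊ < 0. -/
open Real

/-- If the catenary `x = a·cosh((y − b)/a)` meets the unit circle at two distinct heights
`ym < yp`, then `sgn b = sgn (ym + yp)`. -/
theorem catenary_sign_b (a b ym yp : ℝ) (ha : 0 < a) (hlt : ym < yp)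
    (hm : (a * Real.cosh ((ym - b) / a)) ^ 2 + ym ^ 2 = 1)
    (hp : (a * Real.cosh ((yp - b) / a)) ^ 2 + yp ^ 2 = 1) :
    Real.sign b = Real.sign (ym + yp) ∧
      (0 < b ↔ 0 < ym + yp) ∧ (b = 0 ↔ ym + yp = 0) ∧ (b < 0 ↔ ym + yp < 0) := by
  have ha' : a ≠ 0 := ne_of_gt ha
  set u := (yp - b) / a with hu
  set v := (ym - b) / a with hv
  have hid : Real.cosh u ^ 2 - Real.cosh v ^ 2 = Real.sinh (u + v) * Real.sinh (u - v) := by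
    rw [Real.sinh_add, Real.sinh_sub]
    nlinarith [Real.cosh_sq u, Real.cosh_sq v]
  have hkey : a ^ 2 * (Real.sinh (u + v) * Real.sinh (u - v)) = -((ym + yp) * (yp - ym)) := by
    nlinarith [hm, hp, hid]
  have huv : u - v = (yp - ym) / a := by rw [hu, hv]; ring
  have hsge : 0 < Real.sinh (u - v) := by
    rw [huv]; exact Real.sinh_pos_iff.2 (div_pos (by linarith) ha)
  have huvs : u + v = (ym + yp - 2 * b) / a := by rw [hu, hv]; ring
  have hD : 0 < yp - ym := by linarith
  have P1 : 0 < ym + yp → 0 < b := by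
    intro hS
    have hneg : Real.sinh (u + v) < 0 := by
      by_contra h
      push_neg at h
      nlinarith [mul_pos hS hD, pow_pos ha 2, mul_nonneg h hsge.le]
    rw [huvs, Real.sinh_neg_iff] at hneg
    have h2 : ym + yp - 2 * b < 0 := by
      by_contra h
      push_neg at h
      exact absurd (div_nonneg h ha.le) (not_le.2 hneg)
    linarith
  have P2 : ym + yp = 0 → b = 0 := by
    intro hS
    have hz : Real.sinh (u + v) = 0 := by
      have : a ^ 2 * (Real.sinh (u + v) * Real.sinh (u - v)) = 0 := by rw [hkey, hS]; ring
      rcases mul_eq_zero.1 this with h | h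
      · exact absurd h (by positivity)
      · rcases mul_eq_zero.1 h with h' | h'
        · exact h'
        · exact absurd h' (ne_of_gt hsge)
    rw [Real.sinh_eq_zero, huvs, div_eq_zero_iff] at hz
    rcases hz with hz | hz
    · linarith
    · exact absurd hz ha'
  have P3 : ym + yp < 0 → b < 0 := by
    intro hS
    have hpos : 0 < Real.sinh (u + v) := by
      by_contra h
      push_neg at h
      nlinarith [mul_pos (neg_pos.2 hS) hD, pow_pos ha 2, mul_nonneg (neg_nonneg.2 h) hsge.le]
    rw [huvs, Real.sinh_pos_iff] at hpos
    have h2 : 0 < ym + yp - 2 * b := by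
      by_contra h
      push_neg at h
      have : (ym + yp - 2 * b) / a ≤ 0 := div_nonpos_of_nonpos_of_nonneg h ha.le
      linarith
    linarith
  have I1 : 0 < b ↔ 0 < ym + yp := by
    constructor
    · intro hb
      rcases lt_trichotomy (ym + yp) 0 with h | h | h
      · exact absurd (P3 h) (by linarith)
      · exact absurd (P2 h) (by linarith)
      · exact h
    · exact P1
  have I2 : b = 0 ↔ ym + yp = 0 := by
    constructor
    · intro hb
      rcases lt_trichotomy (ym + yp) 0 with h | h | h
      · exact absurd (P3 h) (by linarith)
      · exact h
      · exact absurd (P1 h) (by linarith)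
    · exact P2
  have I3 : b < 0 ↔ ym + yp < 0 := by
    constructor
    · intro hb
      rcases lt_trichotomy (ym + yp) 0 with h | h | h
      · exact h
      · exact absurd (P2 h) (by linarith)
      · exact absurd (P1 h) (by linarith)
    · exact P3
  refine ⟨?_, I1, I2, I3⟩
  rcases lt_trichotomy (ym + yp) 0 with h | h | h
  · rw [Real.sign_of_neg h, Real.sign_of_neg (P3 h)]
  · rw [h, P2 h, Real.sign_zero]
  · rw [Real.sign_of_pos h, Real.sign_of_pos (P1 h)]
end

section
/- Let β ∈ (0, π) and α ∈ (0, π − β). Then there exist unique a > 0 and b ∈ ℝ such that a·cosh((cos β − b)/a) = sin β and sinh((cos β − b)/a) = −cot(α + β); moreover a = sin β · sin(α + β) and b = cos β − sgn(α + β − π/2) · sin β · sin(α + β) · arcosh(1/sin(α + β)). -/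
open Real

/-- The inverse of `cosh` on `[1, ∞)`. -/
noncomputable def arcosh (x : ℝ) : ℝ := Real.log (x + Real.sqrt (x ^ 2 - 1))

lemma arcosh_eq_arsinh {x : ℝ} (hx : 1 ≤ x) :
    _root_.arcosh x = Real.arsinh (Real.sqrt (x ^ 2 - 1)) := by
  have h0 : (0:ℝ) ≤ x ^ 2 - 1 := by nlinarith
  have : 1 + Real.sqrt (x ^ 2 - 1) ^ 2 = x ^ 2 := by
    rw [Real.sq_sqrt h0]; ring
  rw [_root_.arcosh, Real.arsinh, this, Real.sqrt_sq (by linarith), add_comm]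

lemma sinh_arcosh {x : ℝ} (hx : 1 ≤ x) :
    Real.sinh (_root_.arcosh x) = Real.sqrt (x ^ 2 - 1) := by
  rw [arcosh_eq_arsinh hx, Real.sinh_arsinh]

lemma cosh_arcosh {x : ℝ} (hx : 1 ≤ x) :
    Real.cosh (_root_.arcosh x) = x := by
  have h0 : (0:ℝ) ≤ x ^ 2 - 1 := by nlinarith
  rw [arcosh_eq_arsinh hx, Real.cosh_arsinh, Real.sq_sqrt h0]
  rw [show 1 + (x ^ 2 - 1) = x ^ 2 by ring, Real.sqrt_sq (by linarith)]

/-- For `β ∈ (0, π)` and `α ∈ (0, π − β)` there exist unique `a > 0` and `b ∈ ℝ` such that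
the catenary `x = a·cosh((y − b)/a)` meets the unit circle at latitude `β` with inward
angle `α`; moreover `a = sin β · sin(α + β)` and
`b = cos β − sgn(α + β − π/2) · sin β · sin(α + β) · arcosh(1/sin(α + β))`. -/
theorem catenoid_entry_exists_unique (β α : ℝ)
    (hβ : β ∈ Set.Ioo 0 π) (hα : α ∈ Set.Ioo 0 (π - β)) :
    ∃ a b : ℝ,
      (0 < a ∧
        a * Real.cosh ((Real.cos β - b) / a) = Real.sin β ∧
        Real.sinh ((Real.cos β - b) / a) = -Real.cot (α + β)) ∧
      (∀ a' b' : ℝ, 0 < a' →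
        a' * Real.cosh ((Real.cos β - b') / a') = Real.sin β →
        Real.sinh ((Real.cos β - b') / a') = -Real.cot (α + β) →
        a' = a ∧ b' = b) ∧
      a = Real.sin β * Real.sin (α + β) ∧
      b = Real.cos β -
        Real.sign (α + β - π / 2) * Real.sin β * Real.sin (α + β) *
          _root_.arcosh (1 / Real.sin (α + β)) := by
  obtain ⟨hβ0, hβπ⟩ := hβ
  obtain ⟨hα0, hαπ⟩ := hα
  set γ := α + β with hγ
  have hγ0 : 0 < γ := by positivity
  have hγπ : γ < π := by linarith
  have hs : 0 < Real.sin γ := Real.sin_pos_of_pos_of_lt_pi hγ0 hγπ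
  have hsβ : 0 < Real.sin β := Real.sin_pos_of_pos_of_lt_pi hβ0 hβπ
  have hsle : Real.sin γ ≤ 1 := Real.sin_le_one γ
  have hx1 : (1:ℝ) ≤ 1 / Real.sin γ := (le_div_iff₀ hs).mpr (by linarith)
  have hsq : (1 / Real.sin γ) ^ 2 - 1 = Real.cos γ ^ 2 / Real.sin γ ^ 2 := by
    have h := Real.sin_sq_add_cos_sq γ
    field_simp
    nlinarith
  have hsqrt : Real.sqrt ((1 / Real.sin γ) ^ 2 - 1) = |Real.cos γ| / Real.sin γ := by
    rw [hsq, show Real.cos γ ^ 2 / Real.sin γ ^ 2 = (Real.cos γ / Real.sin γ) ^ 2 by ring,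
      Real.sqrt_sq_eq_abs, abs_div, abs_of_pos hs]
  set a : ℝ := Real.sin β * Real.sin γ with ha_def
  have ha : 0 < a := mul_pos hsβ hs
  set C : ℝ := _root_.arcosh (1 / Real.sin γ) with hC
  set b : ℝ := Real.cos β - Real.sign (γ - π / 2) * Real.sin β * Real.sin γ * C with hb_def
  have hcot : Real.cot γ = Real.cos γ / Real.sin γ := Real.cot_eq_cos_div_sin γ
  have ht : (Real.cos β - b) / a = Real.sign (γ - π / 2) * C := by
    rw [hb_def]
    field_simp
    ring
  have hsinhC : Real.sinh C = |Real.cos γ| / Real.sin γ := by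
    rw [hC, _root_.sinh_arcosh hx1, hsqrt]
  have hcoshC : Real.cosh C = 1 / Real.sin γ := _root_.cosh_arcosh hx1
  -- key: sinh t = -cot γ and cosh t = 1/sin γ
  have key : Real.sinh ((Real.cos β - b) / a) = -Real.cot γ ∧
      Real.cosh ((Real.cos β - b) / a) = 1 / Real.sin γ := by
    rw [ht, hcot]
    rcases lt_trichotomy γ (π / 2) with h | h | h
    · have hcpos : 0 < Real.cos γ := Real.cos_pos_of_mem_Ioo ⟨by linarith, h⟩
      rw [Real.sign_of_neg (by linarith)]
      constructor
      · rw [show (-1 : ℝ) * C = -C by ring, Real.sinh_neg, hsinhC,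
          abs_of_pos hcpos]
      · rw [show (-1 : ℝ) * C = -C by ring, Real.cosh_neg, hcoshC]
    · rw [h, sub_self, Real.sign_zero, zero_mul, Real.sinh_zero, Real.cosh_zero]
      norm_num
    · have hcneg : Real.cos γ < 0 :=
        Real.cos_neg_of_pi_div_two_lt_of_lt h (by linarith)
      rw [Real.sign_of_pos (by linarith), one_mul, hsinhC, hcoshC,
        abs_of_neg hcneg]
      constructor <;> ring
  refine ⟨a, b, ⟨ha, ?_, key.1⟩, ?_, rfl, hb_def⟩
  · rw [key.2]
    field_simp
    rw [ha_def, mul_comm]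
  · intro a' b' ha' h1 h2
    -- cosh of the argument is forced
    have hch : Real.cosh ((Real.cos β - b') / a') = 1 / Real.sin γ := by
      have hpos := Real.cosh_pos ((Real.cos β - b') / a')
      have hsq' : Real.cosh ((Real.cos β - b') / a') ^ 2 =
          Real.sinh ((Real.cos β - b') / a') ^ 2 + 1 := Real.cosh_sq _
      rw [h2] at hsq'
      have he : Real.cosh ((Real.cos β - b') / a') ^ 2 = (1 / Real.sin γ) ^ 2 := by
        rw [hsq', hcot]
        have h := Real.sin_sq_add_cos_sq γ
        field_simp
        linarith
      have h1s : 0 < 1 / Real.sin γ := by positivity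
      calc Real.cosh ((Real.cos β - b') / a')
          = Real.sqrt (Real.cosh ((Real.cos β - b') / a') ^ 2) :=
            (Real.sqrt_sq hpos.le).symm
        _ = Real.sqrt ((1 / Real.sin γ) ^ 2) := by rw [he]
        _ = 1 / Real.sin γ := Real.sqrt_sq h1s.le
    have haa : a' = a := by
      rw [hch, mul_one_div, div_eq_iff (ne_of_gt hs)] at h1
      rw [ha_def]
      exact h1
    refine ⟨haa, ?_⟩
    have harg : (Real.cos β - b') / a' = (Real.cos β - b) / a := by
      apply Real.sinh_injective
      rw [h2, key.1]
    rw [haa] at harg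
    have h3 : Real.cos β - b' = Real.cos β - b := by
      have h4 := congrArg (· * a) harg
      simpa [div_mul_cancel₀, ne_of_gt ha] using h4
    linarith
end

section
/- Let a > 0, b ∈ ℝ, β ∈ (0, π/2] and α ∈ (0, β). If a·cosh((cos β − b)/a) = sin β and sinh((cos β − b)/a) = −cot(β − α), then a = sin β · sin(β − α) and b = cos β + sin β · sin(β − α) · arcosh(1/sin(β − α)). -/
open Real

lemma arcosh_cosh (u : ℝ) (hu : 0 ≤ u) : _root_.arcosh (Real.cosh u) = u := by
  have h1 : Real.cosh u ^ 2 - 1 = Real.sinh u ^ 2 := by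
    have := Real.cosh_sq_sub_sinh_sq u; linarith
  have h2 : Real.sqrt (Real.cosh u ^ 2 - 1) = Real.sinh u := by
    rw [h1, Real.sqrt_sq (Real.sinh_nonneg_iff.2 hu)]
  rw [_root_.arcosh, h2, Real.cosh_add_sinh, Real.log_exp]

/-- If the catenary `x = a·cosh((y − b)/a)` meets the unit circle at latitude
`β ∈ (0, π/2]` with outward angle `α ∈ (0, β)`, then `a = sin β · sin(β − α)` and
`b = cos β + sin β · sin(β − α) · arcosh(1/sin(β − α))`. -/
theorem catenoid_exit_formulas (a b β α : ℝ) (ha : 0 < a)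
    (hβ : β ∈ Set.Ioc 0 (π / 2)) (hα : α ∈ Set.Ioo 0 β)
    (h1 : a * Real.cosh ((Real.cos β - b) / a) = Real.sin β)
    (h2 : Real.sinh ((Real.cos β - b) / a) = -Real.cot (β - α)) :
    a = Real.sin β * Real.sin (β - α) ∧
      b = Real.cos β +
        Real.sin β * Real.sin (β - α) * _root_.arcosh (1 / Real.sin (β - α)) := by
  obtain ⟨hβ0, hβ2⟩ := hβ
  obtain ⟨hα0, hαβ⟩ := hα
  set t := (Real.cos β - b) / a with ht
  have hγ0 : 0 < β - α := by linarith
  have hγ2 : β - α < π / 2 := by linarith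
  have hs : 0 < Real.sin (β - α) := Real.sin_pos_of_pos_of_lt_pi hγ0 (by linarith [Real.pi_pos])
  have hc : 0 < Real.cos (β - α) := Real.cos_pos_of_mem_Ioo ⟨by linarith [Real.pi_pos], hγ2⟩
  have hsβ : 0 < Real.sin β := Real.sin_pos_of_pos_of_lt_pi hβ0 (by linarith [Real.pi_pos])
  set s := Real.sin (β - α) with hss
  have hcot : Real.cot (β - α) = Real.cos (β - α) / s := Real.cot_eq_cos_div_sin _
  -- Pythagorean relation
  have hpy : (Real.sin β) ^ 2 = a ^ 2 / s ^ 2 := by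
    have hid := Real.cosh_sq_sub_sinh_sq t
    have hch : Real.cosh t = Real.sin β / a := by field_simp at h1 ⊢; linarith
    rw [hch, h2, hcot] at hid
    have hpyth := Real.sin_sq_add_cos_sq (β - α)
    field_simp at hid ⊢
    nlinarith [hid, hpyth]
  have haeq : a = Real.sin β * s := by
    have h : a ^ 2 = (Real.sin β * s) ^ 2 := by
      field_simp at hpy; nlinarith
    nlinarith [mul_pos hsβ hs]
  refine ⟨haeq, ?_⟩
  -- now find b
  have hch : Real.cosh t = 1 / s := by
    rw [haeq] at h1
    field_simp at h1 ⊢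
    nlinarith
  have hsinh : Real.sinh t < 0 := by
    rw [h2, hcot]
    have : 0 < Real.cos (β - α) / s := div_pos hc hs
    linarith
  have htneg : t < 0 := Real.sinh_neg_iff.1 hsinh
  have harc : _root_.arcosh (1 / s) = -t := by
    rw [← hch, ← Real.cosh_neg, _root_.arcosh_cosh (-t) (by linarith)]
  rw [harc]
  have : t * a = Real.cos β - b := by
    rw [ht]; field_simp
  rw [haeq] at this
  linarith
end

section
/- Let y₁ < y₂ be real numbers with cosh(y₁) < cosh(y₂), and set P₁ = (cosh y₁, y₁), P₂ = (cosh y₂, y₂) in ℝ², with unit tangent vectors v₁ = (sinh y₁, 1)/cosh y₁ and v₂ = (sinh y₂, 1)/cosh y₂ to the standard catenary x = cosh y. Then cosh(y₁)·cosh(y₂)·(⟨P₂ − P₁, v₂⟩ − ⟨P₂ − P₁, v₁⟩) = (cosh y₂ − cosh y₁)·(sinh(y₂ − y₁) − (y₂ − y₁)) > 0; in particular ⟨P₂ − P₁, v₂⟩ > ⟨P₂ − P₁, v₁⟩, so the angle between the chord P₂ − P₁ and the tangent at P₁ is strictly greater than the angle between the chord and the tangent at P₂. -/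
open Real

/-- The Euclidean inner product on `ℝ × ℝ`. -/
def dot2 (u v : ℝ × ℝ) : ℝ := u.1 * v.1 + u.2 * v.2

/-- Chord–tangent angle comparison along the standard catenary `x = cosh y`: for points
`P₁ = (cosh y₁, y₁)`, `P₂ = (cosh y₂, y₂)` with `y₁ < y₂`, `cosh y₁ < cosh y₂`, and unit
tangents `vᵢ = (sinh yᵢ, 1)/cosh yᵢ`, one has
`cosh y₁ · cosh y₂ · (⟨P₂ − P₁, v₂⟩ − ⟨P₂ − P₁, v₁⟩)
  = (cosh y₂ − cosh y₁)·(sinh(y₂ − y₁) − (y₂ − y₁)) > 0`,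
so in particular `⟨P₂ − P₁, v₁⟩ < ⟨P₂ − P₁, v₂⟩`. -/
theorem catenary_chord_tangent_comparison (y₁ y₂ : ℝ) (hy : y₁ < y₂)
    (hc : Real.cosh y₁ < Real.cosh y₂) :
    Real.cosh y₁ * Real.cosh y₂ *
        (dot2 ((Real.cosh y₂, y₂) - (Real.cosh y₁, y₁))
            (Real.sinh y₂ / Real.cosh y₂, 1 / Real.cosh y₂) -
          dot2 ((Real.cosh y₂, y₂) - (Real.cosh y₁, y₁))
            (Real.sinh y₁ / Real.cosh y₁, 1 / Real.cosh y₁)) =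
      (Real.cosh y₂ - Real.cosh y₁) * (Real.sinh (y₂ - y₁) - (y₂ - y₁)) ∧
    0 < (Real.cosh y₂ - Real.cosh y₁) * (Real.sinh (y₂ - y₁) - (y₂ - y₁)) ∧
    dot2 ((Real.cosh y₂, y₂) - (Real.cosh y₁, y₁))
        (Real.sinh y₁ / Real.cosh y₁, 1 / Real.cosh y₁) <
      dot2 ((Real.cosh y₂, y₂) - (Real.cosh y₁, y₁))
        (Real.sinh y₂ / Real.cosh y₂, 1 / Real.cosh y₂) := by

  have h1 : 0 < Real.cosh y₁ := Real.cosh_pos _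
  have h2 : 0 < Real.cosh y₂ := Real.cosh_pos _
  have hsub : Real.sinh (y₂ - y₁) = Real.sinh y₂ * Real.cosh y₁ - Real.cosh y₂ * Real.sinh y₁ :=
    Real.sinh_sub y₂ y₁
  have heq : Real.cosh y₁ * Real.cosh y₂ *
        (dot2 ((Real.cosh y₂, y₂) - (Real.cosh y₁, y₁))
            (Real.sinh y₂ / Real.cosh y₂, 1 / Real.cosh y₂) -
          dot2 ((Real.cosh y₂, y₂) - (Real.cosh y₁, y₁))
            (Real.sinh y₁ / Real.cosh y₁, 1 / Real.cosh y₁)) =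
      (Real.cosh y₂ - Real.cosh y₁) * (Real.sinh (y₂ - y₁) - (y₂ - y₁)) := by
    simp only [dot2, Prod.fst_sub, Prod.snd_sub]
    rw [hsub]
    field_simp
    ring
  have hpos : 0 < (Real.cosh y₂ - Real.cosh y₁) * (Real.sinh (y₂ - y₁) - (y₂ - y₁)) := by
    apply mul_pos (by linarith)
    have := Real.self_lt_sinh_iff.mpr (by linarith : (0:ℝ) < y₂ - y₁)
    linarith
  refine ⟨heq, hpos, ?_⟩
  nlinarith [mul_pos h1 h2]
end

section
/- Let a > 0, b ∈ ℝ, and let 0 < β_in < β_ex < π, α_in ∈ (0, π/2), α_ex ∈ (0, π/2) with α_in + β_in ∈ (0, π) and β_ex − α_ex ∈ (0, π). Assume: a·cosh((cos β_in − b)/a) = sin β_in and sinh((cos β_in − b)/a) = −cot(α_in + β_in); a·cosh((cos β_ex − b)/a) = sin β_ex and sinh((cos β_ex − b)/a) = −cot(β_ex − α_ex); and (a·cosh((y − b)/a))² + y² ≤ 1 for all y ∈ [cos β_ex, cos β_in]. Then sgn(α_in − α_ex) = sgn(b) = sgn(π − β_in − β_ex). -/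
open Real

private lemma cat_sinh_cosh_gt {d : ℝ} (hd : 0 < d) : d < Real.sinh d * Real.cosh d := by
  have h1 : d < Real.sinh d := Real.self_lt_sinh_iff.mpr hd
  have h2 : 1 ≤ Real.cosh d := Real.one_le_cosh d
  nlinarith

set_option maxHeartbeats 1000000 in
private lemma cat_lemB (d q t p r : ℝ) (hd : 0 < d) (hdq : d ≤ q) (ht : 0 ≤ t)
    (hp2 : p^2 = 1 + q^2) (hr2 : r^2 = 1 + t^2) (hp1 : 1 ≤ p) (hr1 : 1 ≤ r)
    (hG : p*r^2 ≤ d*q) : d*(p*r - q*t) ≤ (q*r - p*t)*(d^2 + p*q*r*t) := by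
  have hq0 : 0 < q := lt_of_lt_of_le hd hdq
  have hp0 : 0 < p := lt_of_lt_of_le one_pos hp1
  have hr0 : 0 < r := lt_of_lt_of_le one_pos hr1
  have hrsq : 1 ≤ r^2 := by nlinarith
  have hpr1 : 1 ≤ p*r^2 := by nlinarith
  have hdq2 : d*q ≤ q^2 := by nlinarith
  have hq1 : 1 ≤ q := by nlinarith [hpr1, hG, hdq2]
  have hprr : r^2 ≤ p*r^2 := by nlinarith [mul_nonneg (sub_nonneg.mpr hp1) (sq_nonneg r)]
  have htq : t < q := by nlinarith [hG, hdq2, hr2, hprr, ht]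
  have e1 : (q*r - p*t)*(q*r + p*t) = (q - t)*(q + t) := by
    linear_combination q^2*hr2 - t^2*hp2
  have h2 : 0 < (q - t)*(q + t) := mul_pos (by linarith) (by linarith)
  have h3 : 0 < q*r + p*t :=
    add_pos_of_pos_of_nonneg (mul_pos hq0 hr0) (mul_nonneg hp0.le ht)
  have hA1 : 0 < q*r - p*t := by nlinarith [e1, h2, h3]
  have e2 : (p*r - q*t)*(p*r + q*t) = 1 + q^2 + t^2 := by
    linear_combination r^2*hp2 + (1+q^2)*hr2
  have h4 : 0 < p*r + q*t :=
    add_pos_of_pos_of_nonneg (mul_pos hp0 hr0) (mul_nonneg hq0.le ht)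
  have hA2 : 0 < p*r - q*t := by nlinarith [e2, h4, sq_nonneg q, sq_nonneg t]
  -- A3 : q*(p*r - q*t) ≤ 2*r^2*p*(q*r - p*t)
  have s1 : p*r^2*t ≤ q^2*t := mul_le_mul_of_nonneg_right (hG.trans hdq2) ht
  have s2 : 2*(q*r*t) ≤ q*(r^2+t^2) := by nlinarith [mul_nonneg hq0.le (sq_nonneg (r - t))]
  have s3 : 2*p ≤ 2*q+1 := by nlinarith [hp2, hq1, hp0]
  have i1 : 0 ≤ r*t*(2*q - 2*p + 1) := mul_nonneg (mul_nonneg hr0.le ht) (by linarith)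
  have i2 : q*(2*r^2 - 1) = q*(r^2+t^2) := by linear_combination q*hr2
  have i3 : 0 ≤ 2*q*r^2 - 2*p*r*t - q + r*t := by linarith [s2, i1, i2]
  have A3' : 0 ≤ p*r*(2*q*r^2 - 2*p*r*t - q + r*t) :=
    mul_nonneg (mul_nonneg hp0.le hr0.le) i3
  have hA3 : q*(p*r - q*t) ≤ 2*r^2*p*(q*r - p*t) := by linarith [A3', s1]
  have hq2r2 : r^2 ≤ q^2 := by linarith [hprr, hG, hdq2]
  have T1 : 0 ≤ p^2*r*t*(q^2 - r^2)*(p*r - q*t) :=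
    mul_nonneg (mul_nonneg (mul_nonneg (mul_nonneg (sq_nonneg p) hr0.le) ht)
      (by linarith)) hA2.le
  have hsecond : 0 ≤ (q*r - p*t)*(d*q + p*r^2) - q*(p*r - q*t) := by
    nlinarith [hA3, mul_nonneg hA1.le (sub_nonneg.mpr hG)]
  have T2 : 0 ≤ (d*q - p*r^2)*((q*r - p*t)*(d*q + p*r^2) - q*(p*r - q*t)) :=
    mul_nonneg (by linarith) hsecond
  have hid : q^2*((q*r - p*t)*(d^2 + p*q*r*t) - d*(p*r - q*t)) =
      p^2*r*t*(q^2 - r^2)*(p*r - q*t)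
      + (d*q - p*r^2)*((q*r - p*t)*(d*q + p*r^2) - q*(p*r - q*t)) := by
    linear_combination (q*r^5 - q*r^3 - q*t^2*r^3 - q^2*t*p*r^2)*hp2 + (q*r^3 + q^3*r^3)*hr2
  have hq2 : 0 < q^2 := by positivity
  by_contra hX
  push_neg at hX
  have hneg : q^2*((q*r - p*t)*(d^2 + p*q*r*t) - d*(p*r - q*t)) < 0 :=
    mul_neg_of_pos_of_neg hq2 (by linarith)
  linarith [T1, T2, hid, hneg]

private lemma cat_core1 (a b t1 t2 : ℝ) (ha : 0 < a) (ht : t2 < t1)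
    (E1 : a^2*(Real.cosh t1)^2 + (b + a*t1)^2 = 1)
    (E2 : a^2*(Real.cosh t2)^2 + (b + a*t2)^2 = 1)
    (hb : 0 < b) : 0 < (b + a*t1) + (b + a*t2) := by
  by_contra h
  push_neg at h
  have hy : b + a*t2 < b + a*t1 := by nlinarith
  have hsq : (b + a*t1)^2 ≤ (b + a*t2)^2 := by nlinarith
  have h5 : a^2*(Real.cosh t2)^2 ≤ a^2*(Real.cosh t1)^2 := by linarith
  have h6 : (Real.cosh t2)^2 ≤ (Real.cosh t1)^2 :=
    le_of_mul_le_mul_left h5 (by positivity)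
  have hcc : Real.cosh t2 ≤ Real.cosh t1 :=
    le_of_pow_le_pow_left₀ two_ne_zero (Real.cosh_pos t1).le h6
  have habs := Real.cosh_le_cosh.mp hcc
  have hts : 0 ≤ t1 + t2 := by
    rcases le_or_gt 0 t1 with h1 | h1
    · rw [abs_of_nonneg h1] at habs
      have := neg_abs_le t2
      linarith
    · rw [abs_of_neg h1] at habs
      have h2 : t2 < 0 := lt_trans ht h1
      rw [abs_of_neg h2] at habs
      linarith
  nlinarith [mul_nonneg ha.le hts]

private lemma cat_core0 (a t1 t2 : ℝ) (ha : 0 < a) (ht : t2 < t1)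
    (E1 : a^2*(Real.cosh t1)^2 + (a*t1)^2 = 1)
    (E2 : a^2*(Real.cosh t2)^2 + (a*t2)^2 = 1) : t2 = -t1 := by
  have ha2 : (a^2 : ℝ) ≠ 0 := by positivity
  have heq : (Real.cosh t1)^2 + t1^2 = (Real.cosh t2)^2 + t2^2 := by
    have h : a^2*((Real.cosh t1)^2 + t1^2) = a^2*((Real.cosh t2)^2 + t2^2) := by
      linear_combination E1 - E2
    exact mul_left_cancel₀ ha2 h
  have habs : |t1| = |t2| := by
    rcases lt_trichotomy |t1| |t2| with h | h | h
    · exfalso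
      have hc : Real.cosh t1 < Real.cosh t2 := Real.cosh_lt_cosh.mpr h
      have hsq : t1^2 < t2^2 := by
        rw [← sq_abs t1, ← sq_abs t2]
        exact pow_lt_pow_left₀ h (abs_nonneg t1) (by norm_num)
      nlinarith [Real.cosh_pos (x := t1), Real.cosh_pos (x := t2)]
    · exact h
    · exfalso
      have hc : Real.cosh t2 < Real.cosh t1 := Real.cosh_lt_cosh.mpr h
      have hsq : t2^2 < t1^2 := by
        rw [← sq_abs t1, ← sq_abs t2]
        exact pow_lt_pow_left₀ h (abs_nonneg t2) (by norm_num)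
      nlinarith [Real.cosh_pos (x := t1), Real.cosh_pos (x := t2)]
  rcases abs_eq_abs.mp habs with h | h
  · exact absurd h.symm ht.ne
  · linarith

set_option maxHeartbeats 1600000 in
private lemma cat_key (a b βin βex αin αex : ℝ) (ha : 0 < a) (hb : 0 < b)
    (h1 : 0 < βin) (h2 : βin < βex) (h3 : βex < π)
    (hαin : αin ∈ Set.Ioo 0 (π / 2)) (hαex : αex ∈ Set.Ioo 0 (π / 2))
    (hin0 : αin + βin ∈ Set.Ioo 0 π) (hex0 : βex - αex ∈ Set.Ioo 0 π)
    (hin1 : a * Real.cosh ((Real.cos βin - b) / a) = Real.sin βin)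
    (hin2 : Real.sinh ((Real.cos βin - b) / a) = -Real.cot (αin + βin))
    (hex1 : a * Real.cosh ((Real.cos βex - b) / a) = Real.sin βex)
    (hex2 : Real.sinh ((Real.cos βex - b) / a) = -Real.cot (βex - αex)) :
    αex < αin := by
  set t1 : ℝ := (Real.cos βin - b) / a with ht1def
  set t2 : ℝ := (Real.cos βex - b) / a with ht2def
  have hsθin : 0 < Real.sin (αin + βin) := Real.sin_pos_of_pos_of_lt_pi hin0.1 hin0.2
  have hsθex : 0 < Real.sin (βex - αex) := Real.sin_pos_of_pos_of_lt_pi hex0.1 hex0.2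
  have hy : Real.cos βex < Real.cos βin :=
    Real.strictAntiOn_cos ⟨h1.le, (h2.trans h3).le⟩ ⟨(h1.trans h2).le, h3.le⟩ h2
  have ht12 : t2 < t1 := by
    rw [ht1def, ht2def]
    apply div_lt_div_of_pos_right ?_ ha
    linarith
  have hby1 : b + a * t1 = Real.cos βin := by rw [ht1def]; field_simp; ring
  have hby2 : b + a * t2 = Real.cos βex := by rw [ht2def]; field_simp; ring
  have E1 : a^2 * (Real.cosh t1)^2 + (Real.cos βin)^2 = 1 := by
    linear_combination (a * Real.cosh t1 + Real.sin βin) * hin1 + Real.sin_sq_add_cos_sq βin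
  have E2 : a^2 * (Real.cosh t2)^2 + (Real.cos βex)^2 = 1 := by
    linear_combination (a * Real.cosh t2 + Real.sin βex) * hex1 + Real.sin_sq_add_cos_sq βex
  -- ysum positive
  have hysum : 0 < Real.cos βin + Real.cos βex := by
    have := cat_core1 a b t1 t2 ha ht12 (by rw [hby1]; exact E1) (by rw [hby2]; exact E2) hb
    linarith [hby1, hby2]
  -- |t1| < |t2|, t2 < 0, t1 + t2 < 0
  have hsq : (Real.cos βex)^2 < (Real.cos βin)^2 := by nlinarith only [hysum, hy]
  have hC12 : Real.cosh t1 < Real.cosh t2 := by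
    have h5 : a^2 * (Real.cosh t1)^2 < a^2 * (Real.cosh t2)^2 := by linarith
    have h6 : (Real.cosh t1)^2 < (Real.cosh t2)^2 :=
      lt_of_mul_lt_mul_left h5 (by positivity)
    nlinarith only [h6, Real.cosh_pos t1, Real.cosh_pos t2]
  have habs : |t1| < |t2| := Real.cosh_lt_cosh.mp hC12
  have ht2neg : t2 < 0 := by
    by_contra hcon
    push_neg at hcon
    rw [abs_of_nonneg hcon] at habs
    linarith [le_abs_self t1]
  have hts : t1 + t2 < 0 := by
    rw [abs_of_neg ht2neg] at habs
    linarith [le_abs_self t1]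
  -- symmetric variables
  set d : ℝ := (t1 - t2) / 2 with hdd
  set σ : ℝ := -((t1 + t2) / 2) with hσσ
  have hd : 0 < d := by rw [hdd]; linarith
  have hσ : 0 < σ := by rw [hσσ]; linarith
  set p : ℝ := Real.cosh d with hpd
  set q : ℝ := Real.sinh d with hqd
  set r : ℝ := Real.cosh σ with hrd
  set tt : ℝ := Real.sinh σ with httd
  have hp1 : 1 ≤ p := Real.one_le_cosh d
  have hr1 : 1 ≤ r := Real.one_le_cosh σ
  have hq0 : 0 < q := by rw [hqd]; exact Real.sinh_pos_iff.mpr hd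
  have htt0 : 0 < tt := by rw [httd]; exact Real.sinh_pos_iff.mpr hσ
  have hp2 : p^2 = 1 + q^2 := Real.cosh_sq' d
  have hr2 : r^2 = 1 + tt^2 := Real.cosh_sq' σ
  have ht1e : t1 = d - σ := by rw [hdd, hσσ]; ring
  have ht2e : t2 = -(d + σ) := by rw [hdd, hσσ]; ring
  have hC1 : Real.cosh t1 = p*r - q*tt := by
    rw [ht1e, Real.cosh_sub, hpd, hqd, hrd, httd]
  have hS1 : Real.sinh t1 = q*r - p*tt := by
    rw [ht1e, Real.sinh_sub, hpd, hqd, hrd, httd]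
  have hC2 : Real.cosh t2 = p*r + q*tt := by
    rw [ht2e, Real.cosh_neg, Real.cosh_add, hpd, hqd, hrd, httd]
  have hS2 : Real.sinh t2 = -(q*r + p*tt) := by
    rw [ht2e, Real.sinh_neg, Real.sinh_add, hpd, hqd, hrd, httd]
  have hdiff : Real.cos βin - Real.cos βex = 2*a*d := by
    rw [hdd]; field_simp [ht1def, ht2def]; linarith [hby1, hby2]
  have E1p : a^2*(p*r - q*tt)^2 + (Real.cos βin)^2 = 1 := by rw [← hC1]; exact E1
  have E2p : a^2*(p*r + q*tt)^2 + (Real.cos βex)^2 = 1 := by rw [← hC2]; exact E2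
  have hsum2a : (2*a)*(d*(Real.cos βin + Real.cos βex)) = (2*a)*(2*a*(p*q*r*tt)) := by
    linear_combination (-(Real.cos βin + Real.cos βex))*hdiff + E1p - E2p
  have hsum : d*(Real.cos βin + Real.cos βex) = 2*a*(p*q*r*tt) :=
    mul_left_cancel₀ (by positivity) hsum2a
  have hy1d : d*(Real.cos βin) = a*(d^2 + p*q*r*tt) := by
    linear_combination (1/2)*hsum + (d/2)*hdiff
  have hy2d : d*(Real.cos βex) = a*(p*q*r*tt - d^2) := by
    linear_combination (1/2)*hsum - (d/2)*hdiff
  -- trig: sin θ * cosh t = 1 identities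
  have hcos1 : Real.sinh t1 * Real.sin (αin + βin) = -Real.cos (αin + βin) := by
    rw [hin2, Real.cot_eq_cos_div_sin]
    field_simp
  have hcos2 : Real.sinh t2 * Real.sin (βex - αex) = -Real.cos (βex - αex) := by
    rw [hex2, Real.cot_eq_cos_div_sin]
    field_simp
  have hsc1 : Real.sin (αin + βin) * Real.cosh t1 = 1 := by
    have hsq1 : (Real.sin (αin + βin) * Real.cosh t1)^2 = 1 := by
      linear_combination (Real.sin (αin + βin))^2 * Real.cosh_sq t1
        + (Real.sinh t1 * Real.sin (αin + βin) - Real.cos (αin + βin)) * hcos1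
        + Real.sin_sq_add_cos_sq (αin + βin)
    have hpos : 0 < Real.sin (αin + βin) * Real.cosh t1 := mul_pos hsθin (Real.cosh_pos t1)
    have hfac : (Real.sin (αin + βin) * Real.cosh t1 - 1) *
        (Real.sin (αin + βin) * Real.cosh t1 + 1) = 0 := by linear_combination hsq1
    rcases mul_eq_zero.mp hfac with h | h
    · linarith
    · linarith
  have hsc2 : Real.sin (βex - αex) * Real.cosh t2 = 1 := by
    have hsq1 : (Real.sin (βex - αex) * Real.cosh t2)^2 = 1 := by
      linear_combination (Real.sin (βex - αex))^2 * Real.cosh_sq t2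
        + (Real.sinh t2 * Real.sin (βex - αex) - Real.cos (βex - αex)) * hcos2
        + Real.sin_sq_add_cos_sq (βex - αex)
    have hpos : 0 < Real.sin (βex - αex) * Real.cosh t2 := mul_pos hsθex (Real.cosh_pos t2)
    have hfac : (Real.sin (βex - αex) * Real.cosh t2 - 1) *
        (Real.sin (βex - αex) * Real.cosh t2 + 1) = 0 := by linear_combination hsq1
    rcases mul_eq_zero.mp hfac with h | h
    · linarith
    · linarith
  have hcosv1 : Real.cos (αin + βin) = -(Real.sinh t1 * Real.sin (αin + βin)) := by
    linarith [hcos1]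
  have hcosv2 : Real.cos (βex - αex) = -(Real.sinh t2 * Real.sin (βex - αex)) := by
    linarith [hcos2]
  -- sin/cos of α in terms of hyperbolic data
  have hsin_in : Real.sin αin * Real.cosh t1 =
      Real.cos βin + a * Real.sinh t1 * Real.cosh t1 := by
    rw [show αin = (αin + βin) - βin from by ring, Real.sin_sub, hcosv1, ← hin1]
    linear_combination (Real.cos βin + a * Real.sinh t1 * Real.cosh t1) * hsc1
  have hsin_ex : Real.sin αex * Real.cosh t2 =
      -(Real.cos βex + a * Real.sinh t2 * Real.cosh t2) := by
    rw [show αex = βex - (βex - αex) from by ring, Real.sin_sub, hcosv2, ← hex1]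
    linear_combination (-(Real.cos βex + a * Real.sinh t2 * Real.cosh t2)) * hsc2
  have hcos_in : Real.cos αin * Real.cosh t1 =
      a * Real.cosh t1 - Real.sinh t1 * Real.cos βin := by
    rw [show αin = (αin + βin) - βin from by ring, Real.cos_sub, hcosv1, ← hin1]
    linear_combination (a * Real.cosh t1 - Real.sinh t1 * Real.cos βin) * hsc1
  -- the main identity
  have hQid : d*((Real.cos βin + a * Real.sinh t1 * Real.cosh t1) * Real.cosh t2
      + (Real.cos βex + a * Real.sinh t2 * Real.cosh t2) * Real.cosh t1)
      = 2*a*tt*(p*q - d)*(p*r^2 - d*q) := by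
    rw [hC1, hC2, hS1, hS2]
    linear_combination (p*r + q*tt)*hy1d + (p*r - q*tt)*hy2d
      - 2*a*d*tt*p*r^2*hp2 - 2*a*d*q^2*tt*p*hr2
  have hfac1 : 0 < p*q - d := by
    have := cat_sinh_cosh_gt hd
    rw [← hqd, ← hpd] at this
    linarith only [this]
  -- the key positivity via lemB
  have hG : 0 < p*r^2 - d*q := by
    by_contra hcon
    push_neg at hcon
    have hGle : p*r^2 ≤ d*q := by linarith
    have hdq : d ≤ q := by
      have := Real.self_lt_sinh_iff.mpr hd
      rw [← hqd] at this
      linarith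
    have hlemB := cat_lemB d q tt p r hd hdq htt0.le hp2 hr2 hp1 hr1 hGle
    have hpos' : 0 < a * Real.cosh t1 - Real.sinh t1 * Real.cos βin := by
      have h7 : 0 < Real.cos αin :=
        Real.cos_pos_of_mem_Ioo ⟨by linarith [hαin.1, Real.pi_pos], hαin.2⟩
      have := mul_pos h7 (Real.cosh_pos t1)
      rw [hcos_in] at this
      exact this
    have step1 : 0 < d * (a * Real.cosh t1 - Real.sinh t1 * Real.cos βin) :=
      mul_pos hd hpos'
    rw [hC1, hS1] at step1
    have hy1d' : (q*r - p*tt)*(d*(Real.cos βin)) = (q*r - p*tt)*(a*(d^2 + p*q*r*tt)) := by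
      rw [hy1d]
    have hlemB' : 0 ≤ a*((q*r - p*tt)*(d^2 + p*q*r*tt) - d*(p*r - q*tt)) :=
      mul_nonneg ha.le (sub_nonneg.mpr hlemB)
    linarith only [step1, hy1d', hlemB']
  have hQpos : 0 < (Real.cos βin + a * Real.sinh t1 * Real.cosh t1) * Real.cosh t2
      + (Real.cos βex + a * Real.sinh t2 * Real.cosh t2) * Real.cosh t1 := by
    have hR : 0 < 2*a*tt*(p*q - d)*(p*r^2 - d*q) := by
      apply mul_pos (mul_pos (mul_pos (by linarith) htt0) hfac1) hG
    nlinarith only [hQid, hR, hd]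
  have hsinlt : Real.sin αex < Real.sin αin := by
    have hkey : (Real.sin αin - Real.sin αex) * (Real.cosh t1 * Real.cosh t2)
        = (Real.cos βin + a * Real.sinh t1 * Real.cosh t1) * Real.cosh t2
        + (Real.cos βex + a * Real.sinh t2 * Real.cosh t2) * Real.cosh t1 := by
      linear_combination (Real.cosh t2) * hsin_in - (Real.cosh t1) * hsin_ex
    nlinarith only [hkey, hQpos, mul_pos (Real.cosh_pos t1) (Real.cosh_pos t2)]
  by_contra hcon
  push_neg at hcon
  have hmono : Real.sin αin ≤ Real.sin αex := by
    rcases eq_or_lt_of_le hcon with h | h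
    · rw [h]
    · exact le_of_lt (Real.strictMonoOn_sin
        ⟨by linarith [hαin.1, Real.pi_pos], by linarith [hαin.2]⟩
        ⟨by linarith [hαex.1, Real.pi_pos], by linarith [hαex.2]⟩ h)
  linarith

set_option maxHeartbeats 1600000 in
/-- If the catenary `x = a·cosh((y − b)/a)` enters the unit circle at latitude `βin` with
inward angle `αin`, exits at latitude `βex` with outward angle `αex`, and the arc between
lies in the closed unit disk, then `sgn(αin − αex) = sgn b = sgn(π − βin − βex)`. -/
theorem catenary_unbalancing_signs (a b βin βex αin αex : ℝ) (ha : 0 < a)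
    (h1 : 0 < βin) (h2 : βin < βex) (h3 : βex < π)
    (hαin : αin ∈ Set.Ioo 0 (π / 2)) (hαex : αex ∈ Set.Ioo 0 (π / 2))
    (hin0 : αin + βin ∈ Set.Ioo 0 π) (hex0 : βex - αex ∈ Set.Ioo 0 π)
    (hin1 : a * Real.cosh ((Real.cos βin - b) / a) = Real.sin βin)
    (hin2 : Real.sinh ((Real.cos βin - b) / a) = -Real.cot (αin + βin))
    (hex1 : a * Real.cosh ((Real.cos βex - b) / a) = Real.sin βex)
    (hex2 : Real.sinh ((Real.cos βex - b) / a) = -Real.cot (βex - αex))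
    (hdisk : ∀ y ∈ Set.Icc (Real.cos βex) (Real.cos βin),
      (a * Real.cosh ((y - b) / a)) ^ 2 + y ^ 2 ≤ 1) :
    Real.sign (αin - αex) = Real.sign b ∧
      Real.sign b = Real.sign (π - βin - βex) := by
  clear hdisk
  set t1 : ℝ := (Real.cos βin - b) / a with ht1def
  set t2 : ℝ := (Real.cos βex - b) / a with ht2def
  have hy : Real.cos βex < Real.cos βin :=
    Real.strictAntiOn_cos ⟨h1.le, (h2.trans h3).le⟩ ⟨(h1.trans h2).le, h3.le⟩ h2
  have ht12 : t2 < t1 := by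
    rw [ht1def, ht2def]
    apply div_lt_div_of_pos_right ?_ ha
    linarith
  have hby1 : b + a * t1 = Real.cos βin := by rw [ht1def]; field_simp; ring
  have hby2 : b + a * t2 = Real.cos βex := by rw [ht2def]; field_simp; ring
  have E1 : a^2 * (Real.cosh t1)^2 + (Real.cos βin)^2 = 1 := by
    linear_combination (a * Real.cosh t1 + Real.sin βin) * hin1 + Real.sin_sq_add_cos_sq βin
  have E2 : a^2 * (Real.cosh t2)^2 + (Real.cos βex)^2 = 1 := by
    linear_combination (a * Real.cosh t2 + Real.sin βex) * hex1 + Real.sin_sq_add_cos_sq βex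
  have hm1 : βin ∈ Set.Icc 0 π := ⟨h1.le, (h2.trans h3).le⟩
  have hm2 : π - βex ∈ Set.Icc 0 π := ⟨by linarith, by linarith [h1.trans h2]⟩
  rcases lt_trichotomy b 0 with hb | hb | hb
  · -- b < 0
    have harg1 : (Real.cos (π - βex) - -b) / a = -t2 := by
      rw [Real.cos_pi_sub, ht2def]; ring
    have harg2 : (Real.cos (π - βin) - -b) / a = -t1 := by
      rw [Real.cos_pi_sub, ht1def]; ring
    have hcotps : ∀ x : ℝ, Real.cot (π - x) = -Real.cot x := fun x => by
      rw [Real.cot_eq_cos_div_sin, Real.cot_eq_cos_div_sin, Real.cos_pi_sub,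
        Real.sin_pi_sub, neg_div]
    have hkey : αin < αex := by
      have := cat_key a (-b) (π - βex) (π - βin) αex αin ha (by linarith)
        (by linarith) (by linarith) (by linarith) hαex hαin
        ⟨by linarith [hex0.2], by linarith [hex0.1]⟩
        ⟨by linarith [hin0.2], by linarith [hin0.1]⟩
        (by rw [harg1, Real.cosh_neg, Real.sin_pi_sub]; exact hex1)
        (by rw [harg1, Real.sinh_neg, hex2,
              show αex + (π - βex) = π - (βex - αex) from by ring, hcotps])
        (by rw [harg2, Real.cosh_neg, Real.sin_pi_sub]; exact hin1)
        (by rw [harg2, Real.sinh_neg, hin2,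
              show (π - βin) - αin = π - (αin + βin) from by ring, hcotps])
      exact this
    have hysum : Real.cos βin + Real.cos βex < 0 := by
      have E1' : a^2 * (Real.cosh (-t1))^2 + (-b + a * (-t1))^2 = 1 := by
        rw [Real.cosh_neg]
        linear_combination E1 + (b + a*t1 + Real.cos βin) * hby1
      have E2' : a^2 * (Real.cosh (-t2))^2 + (-b + a * (-t2))^2 = 1 := by
        rw [Real.cosh_neg]
        linear_combination E2 + (b + a*t2 + Real.cos βex) * hby2
      have := cat_core1 a (-b) (-t2) (-t1) ha (by linarith) E2' E1' (by linarith)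
      linarith [hby1, hby2]
    have hβ : π - βin - βex < 0 := by
      rcases lt_trichotomy βin (π - βex) with hc | hc | hc
      · exfalso
        have hlt := Real.strictAntiOn_cos hm1 hm2 hc
        rw [Real.cos_pi_sub] at hlt
        linarith
      · exfalso
        have : Real.cos βin = Real.cos (π - βex) := by rw [hc]
        rw [Real.cos_pi_sub] at this
        linarith
      · linarith
    rw [Real.sign_of_neg hb, Real.sign_of_neg (by linarith : αin - αex < 0),
      Real.sign_of_neg hβ]
    exact ⟨rfl, rfl⟩
  · -- b = 0
    subst hb
    have hat1 : a * t1 = Real.cos βin := by linarith [hby1]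
    have hat2 : a * t2 = Real.cos βex := by linarith [hby2]
    have E1z : a^2 * (Real.cosh t1)^2 + (a*t1)^2 = 1 := by rw [hat1]; exact E1
    have E2z : a^2 * (Real.cosh t2)^2 + (a*t2)^2 = 1 := by rw [hat2]; exact E2
    have ht21 : t2 = -t1 := cat_core0 a t1 t2 ha ht12 E1z E2z
    have hyneg : Real.cos βex = -Real.cos βin := by
      have : a * t2 = -(a * t1) := by rw [ht21]; ring
      linarith
    have hβeq : βex = π - βin := by
      apply Real.injOn_cos ⟨(h1.trans h2).le, h3.le⟩ ⟨by linarith, by linarith⟩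
      rw [Real.cos_pi_sub]
      exact hyneg
    have hsθin : 0 < Real.sin (αin + βin) := Real.sin_pos_of_pos_of_lt_pi hin0.1 hin0.2
    have hsθex : 0 < Real.sin (βex - αex) := Real.sin_pos_of_pos_of_lt_pi hex0.1 hex0.2
    have hcos1 : Real.sinh t1 * Real.sin (αin + βin) = -Real.cos (αin + βin) := by
      rw [hin2, Real.cot_eq_cos_div_sin]
      field_simp
    have hcos2 : Real.sinh t2 * Real.sin (βex - αex) = -Real.cos (βex - αex) := by
      rw [hex2, Real.cot_eq_cos_div_sin]
      field_simp
    have hsinh21 : Real.sinh t2 = -Real.sinh t1 := by rw [ht21, Real.sinh_neg]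
    have h9 : Real.sin (αin + βin) * Real.cos (βex - αex)
        + Real.cos (αin + βin) * Real.sin (βex - αex) = 0 := by
      linear_combination (Real.sin (αin + βin)) * hcos2 + (Real.sin (βex - αex)) * hcos1
        - (Real.sin (αin + βin) * Real.sin (βex - αex)) * hsinh21
    have hzero : Real.sin ((αin + βin) + (βex - αex) - π) = 0 := by
      rw [Real.sin_sub_pi, Real.sin_add]
      linarith [h9]
    have hθsum : (αin + βin) + (βex - αex) - π = 0 := by
      have hlow : -π < (αin + βin) + (βex - αex) - π := by
        linarith [hin0.1, hex0.1]
      have hhigh : (αin + βin) + (βex - αex) - π < π := by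
        linarith [hin0.2, hex0.2]
      exact (Real.sin_eq_zero_iff_of_lt_of_lt hlow hhigh).mp hzero
    have hα0 : αin - αex = 0 := by
      have hβsum : βin + βex = π := by rw [hβeq]; ring
      linarith
    rw [hα0, show π - βin - βex = 0 from by rw [hβeq]; ring, Real.sign_zero]
    exact ⟨rfl, rfl⟩
  · -- b > 0
    have hkey : αex < αin :=
      cat_key a b βin βex αin αex ha hb h1 h2 h3 hαin hαex hin0 hex0 hin1 hin2 hex1 hex2
    have hysum : 0 < Real.cos βin + Real.cos βex := by
      have := cat_core1 a b t1 t2 ha ht12 (by rw [hby1]; exact E1) (by rw [hby2]; exact E2) hb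
      linarith [hby1, hby2]
    have hβ : 0 < π - βin - βex := by
      rcases lt_trichotomy βin (π - βex) with hc | hc | hc
      · linarith
      · exfalso
        have : Real.cos βin = Real.cos (π - βex) := by rw [hc]
        rw [Real.cos_pi_sub] at this
        linarith
      · exfalso
        have hlt := Real.strictAntiOn_cos hm2 hm1 hc
        rw [Real.cos_pi_sub] at hlt
        linarith
    rw [Real.sign_of_pos hb, Real.sign_of_pos (by linarith : 0 < αin - αex),
      Real.sign_of_pos hβ]
    exact ⟨rfl, rfl⟩
end

section
/- Let a > 0, b ∈ ℝ, and let 0 < β_in < β_ex < π, α_in ∈ (0, π/2), α_ex ∈ (0, π/2) with α_in + β_in ∈ (0, π) and β_ex − α_ex ∈ (0, π). Assume: a·cosh((cos β_in − b)/a) = sin β_in and sinh((cos β_in − b)/a) = −cot(α_in + β_in); a·cosh((cos β_ex − b)/a) = sin β_ex and sinh((cos β_ex − b)/a) = −cot(β_ex − α_ex); and (a·cosh((y − b)/a))² + y² ≤ 1 for all y ∈ [cos β_ex, cos β_in]. Then β_ex < β_in + 2·α_in. -/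
open Real

/-- Strict tangent-line inequality for `cosh`. -/
lemma cosh_tangent_lt (u t : ℝ) (ht : t ≠ 0) :
    Real.cosh u + Real.sinh u * t < Real.cosh (u + t) := by
  have hA := Real.add_one_lt_exp ht
  have hB := Real.add_one_lt_exp (neg_ne_zero.mpr ht)
  have hc : 0 < Real.cosh u := Real.cosh_pos u
  have hs1 : Real.sinh u < Real.cosh u := Real.sinh_lt_cosh u
  have hs2 : -Real.cosh u < Real.sinh u := by
    have h := Real.sinh_lt_cosh (-u)
    rw [Real.sinh_neg, Real.cosh_neg] at h
    linarith
  have hP : 0 < Real.cosh t - 1 + (Real.sinh t - t) := by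
    rw [Real.cosh_eq, Real.sinh_eq]; linarith
  have hQ : 0 < Real.cosh t - 1 - (Real.sinh t - t) := by
    rw [Real.cosh_eq, Real.sinh_eq]; linarith
  rw [Real.cosh_add]
  nlinarith [mul_pos (by linarith : (0:ℝ) < Real.cosh u + Real.sinh u) hP,
    mul_pos (by linarith : (0:ℝ) < Real.cosh u - Real.sinh u) hQ]

/-- If the catenary `x = a·cosh((y − b)/a)` enters the unit circle at latitude `βin` with
inward angle `αin`, exits at latitude `βex` with outward angle `αex`, and the arc between
lies in the closed unit disk, then `βex < βin + 2·αin`. -/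
theorem catenary_exit_latitude_bound (a b βin βex αin αex : ℝ) (ha : 0 < a)
    (h1 : 0 < βin) (h2 : βin < βex) (h3 : βex < π)
    (hαin : αin ∈ Set.Ioo 0 (π / 2)) (hαex : αex ∈ Set.Ioo 0 (π / 2))
    (hin0 : αin + βin ∈ Set.Ioo 0 π) (hex0 : βex - αex ∈ Set.Ioo 0 π)
    (hin1 : a * Real.cosh ((Real.cos βin - b) / a) = Real.sin βin)
    (hin2 : Real.sinh ((Real.cos βin - b) / a) = -Real.cot (αin + βin))
    (hex1 : a * Real.cosh ((Real.cos βex - b) / a) = Real.sin βex)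
    (hex2 : Real.sinh ((Real.cos βex - b) / a) = -Real.cot (βex - αex))
    (hdisk : ∀ y ∈ Set.Icc (Real.cos βex) (Real.cos βin),
      (a * Real.cosh ((y - b) / a)) ^ 2 + y ^ 2 ≤ 1) :
    βex < βin + 2 * αin := by
  by_contra hcon
  push_neg at hcon
  set θ : ℝ := βin + 2 * αin with hθ
  have hθβ : βin < θ := by have := hαin.1; simp only [hθ]; linarith
  have hθπ : θ < π := lt_of_le_of_lt hcon h3
  have hθ0 : 0 < θ := lt_trans h1 hθβ
  have hγ : 0 < Real.sin (αin + βin) := Real.sin_pos_of_pos_of_lt_pi hin0.1 hin0.2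
  -- cosine monotonicity
  have hc1 : Real.cos θ < Real.cos βin :=
    Real.cos_lt_cos_of_nonneg_of_le_pi (le_of_lt h1) (le_of_lt hθπ) hθβ
  have hc2 : Real.cos βex ≤ Real.cos θ := by
    rcases eq_or_lt_of_le hcon with h | h
    · rw [h]
    · exact le_of_lt (Real.cos_lt_cos_of_nonneg_of_le_pi (le_of_lt hθ0) (le_of_lt h3) h)
  -- tangent line inequality at entry point, evaluated at y = cos θ
  set u : ℝ := (Real.cos βin - b) / a with hu
  set t : ℝ := (Real.cos θ - Real.cos βin) / a with ht
  have htne : t ≠ 0 := by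
    have : t < 0 := div_neg_of_neg_of_pos (by linarith) ha
    exact ne_of_lt this
  have hut : u + t = (Real.cos θ - b) / a := by
    field_simp [hu, ht]
    rw [hu, ht, ← add_div, div_mul_cancel₀ _ (ne_of_gt ha)]; ring
  have htan := cosh_tangent_lt u t htne
  rw [hut] at htan
  have hat : a * t = Real.cos θ - Real.cos βin := by
    rw [ht]; field_simp
  -- the value of the catenary at y = cos θ
  set F : ℝ := a * Real.cosh ((Real.cos θ - b) / a) with hF
  have hin1' : a * Real.cosh u = Real.sin βin := by rw [hu]; exact hin1
  have hstep : Real.sin βin + Real.sinh u * (Real.cos θ - Real.cos βin) < F := by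
    have h5 := mul_lt_mul_of_pos_left htan ha
    rw [mul_add] at h5
    have h6 : a * (Real.sinh u * t) = Real.sinh u * (Real.cos θ - Real.cos βin) := by
      rw [← hat]; ring
    rw [hF]
    linarith [h5, h6, hin1']
  rw [hu, hin2] at hstep
  -- trig identity: sin βin - cot (αin+βin) * (cos θ - cos βin) = sin θ
  have hid : Real.sin βin * Real.sin (αin + βin)
      - Real.cos (αin + βin) * (Real.cos θ - Real.cos βin)
      = Real.sin θ * Real.sin (αin + βin) := by
    have e1 : Real.cos ((αin + βin) - βin)
        = Real.cos (αin + βin) * Real.cos βin + Real.sin (αin + βin) * Real.sin βin :=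
      Real.cos_sub _ _
    have e2 : Real.cos (θ - (αin + βin))
        = Real.cos θ * Real.cos (αin + βin) + Real.sin θ * Real.sin (αin + βin) :=
      Real.cos_sub _ _
    have e3 : (αin + βin) - βin = θ - (αin + βin) := by rw [hθ]; ring
    rw [e3, e2] at e1
    linarith
  have hsinθ : Real.sin θ < F := by
    have hcot : Real.cot (αin + βin) = Real.cos (αin + βin) / Real.sin (αin + βin) :=
      Real.cot_eq_cos_div_sin _
    rw [hcot] at hstep
    have hγne : Real.sin (αin + βin) ≠ 0 := ne_of_gt hγ
    have : Real.sin βin - Real.cos (αin + βin) / Real.sin (αin + βin)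
        * (Real.cos θ - Real.cos βin) = Real.sin θ := by
      field_simp
      linarith [hid]
    linarith [hstep, this.symm.le, this.ge, this.le]
  -- disk condition at y = cos θ
  have hd := hdisk (Real.cos θ) ⟨hc2, le_of_lt hc1⟩
  rw [← hF] at hd
  have hsc : Real.sin θ ^ 2 + Real.cos θ ^ 2 = 1 := Real.sin_sq_add_cos_sq θ
  have hF0 : 0 < F := mul_pos ha (Real.cosh_pos _)
  have hs0 : 0 < Real.sin θ := Real.sin_pos_of_pos_of_lt_pi hθ0 hθπ
  nlinarith [hd, hsc, hF0, hs0, hsinθ]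
end

section
/- For i = 1, 2 let 0 < βⁱ_in < βⁱ_ex < π and let vⁱ : [βⁱ_in, βⁱ_ex] → ℝ be differentiable, strictly decreasing, satisfy the polar catenary equation (vⁱ)'(β) = −cot(β)·vⁱ(β)·(vⁱ(β)² + 1) − 2·(vⁱ(β)² + 1) on [βⁱ_in, βⁱ_ex], satisfy vⁱ(βⁱ_in) > 0 > vⁱ(βⁱ_ex), and satisfy ∫_{βⁱ_in}^{βⁱ_ex} vⁱ(β) dβ = 0. If either (β¹_in < β²_in and v¹(β¹_in) = v²(β²_in)) or (β¹_in = β²_in and v¹(β¹_in) < v²(β²_in)), then β¹_ex < β²_ex and v¹(β¹_ex) > v²(β²_ex). -/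
open Real Set Filter Topology

namespace PolarCatAux
/-- derivative of cotangent -/
lemma hasDerivAt_cot {x : ℝ} (h : Real.sin x ≠ 0) :
    HasDerivAt Real.cot (-(1 / Real.sin x ^ 2)) x := by
  have h1 : HasDerivAt (fun y => Real.cos y / Real.sin y)
      ((-Real.sin x * Real.sin x - Real.cos x * Real.cos x) / Real.sin x ^ 2) x :=
    (Real.hasDerivAt_cos x).div (Real.hasDerivAt_sin x) h
  have h2 : (fun y => Real.cos y / Real.sin y) = Real.cot := by
    funext y; rw [Real.cot_eq_cos_div_sin]
  rw [h2] at h1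
  convert h1 using 1
  have h3 : -Real.sin x * Real.sin x - Real.cos x * Real.cos x = -1 := by
    nlinarith [Real.sin_sq_add_cos_sq x]
  rw [h3]
  ring

lemma cot_lt_cot {x y : ℝ} (hx : 0 < x) (hxy : x < y) (hy : y < π) :
    Real.cot y < Real.cot x := by
  have h : StrictAntiOn Real.cot (Set.Icc x y) := by
    apply strictAntiOn_of_deriv_neg (convex_Icc x y)
    · intro z hz
      have hs : 0 < Real.sin z :=
        Real.sin_pos_of_pos_of_lt_pi (hx.trans_le hz.1) (lt_of_le_of_lt hz.2 hy)
      exact (hasDerivAt_cot hs.ne').continuousAt.continuousWithinAt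
    · intro z hz
      rw [interior_Icc] at hz
      have hs : 0 < Real.sin z :=
        Real.sin_pos_of_pos_of_lt_pi (hx.trans hz.1) (hz.2.trans hy)
      rw [(hasDerivAt_cot hs.ne').deriv]
      have : 0 < 1 / Real.sin z ^ 2 := by positivity
      linarith
  exact h (left_mem_Icc.2 hxy.le) (right_mem_Icc.2 hxy.le) hxy

lemma cot_continuousOn {a b : ℝ} (ha : 0 < a) (hb : b < π) :
    ContinuousOn Real.cot (Set.Icc a b) := by
  intro z hz
  have hs : 0 < Real.sin z :=
    Real.sin_pos_of_pos_of_lt_pi (ha.trans_le hz.1) (lt_of_le_of_lt hz.2 hb)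
  exact (hasDerivAt_cot hs.ne').continuousAt.continuousWithinAt

/-- left slope sign lemma -/
lemma deriv_nonpos_left {a b x d : ℝ} {f : ℝ → ℝ} (hax : a < x) (hxb : x ≤ b)
    (hd : HasDerivWithinAt f d (Set.Icc a b) x)
    (h : ∀ y ∈ Set.Ico a x, f x ≤ f y) : d ≤ 0 := by
  have ht : Filter.Tendsto (slope f x) (nhdsWithin x (Set.Icc a b \ {x})) (nhds d) :=
    hasDerivWithinAt_iff_tendsto_slope.1 hd
  have hsub : Set.Ico a x ⊆ Set.Icc a b \ {x} := fun y hy =>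
    ⟨⟨hy.1, hy.2.le.trans hxb⟩, ne_of_lt hy.2⟩
  have ht2 := ht.mono_left (nhdsWithin_mono x hsub)
  haveI hne : (nhdsWithin x (Set.Ico a x)).NeBot := by
    rw [nhdsWithin_Ico_eq_nhdsLT hax]; infer_instance
  refine le_of_tendsto ht2 ?_
  filter_upwards [self_mem_nhdsWithin] with y hy
  rw [slope_def_field]
  apply div_nonpos_of_nonneg_of_nonpos
  · exact sub_nonneg.2 (h y hy)
  · linarith [hy.2]

/-- right slope sign lemma -/
lemma deriv_nonneg_right {a b x d : ℝ} {f : ℝ → ℝ} (hax : a ≤ x) (hxb : x < b)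
    (hd : HasDerivWithinAt f d (Set.Icc a b) x)
    (h : ∀ y ∈ Set.Ioc x b, f x ≤ f y) : 0 ≤ d := by
  have ht : Filter.Tendsto (slope f x) (nhdsWithin x (Set.Icc a b \ {x})) (nhds d) :=
    hasDerivWithinAt_iff_tendsto_slope.1 hd
  have hsub : Set.Ioc x b ⊆ Set.Icc a b \ {x} := fun y hy =>
    ⟨⟨hax.trans hy.1.le, hy.2⟩, (ne_of_gt hy.1)⟩
  have ht2 := ht.mono_left (nhdsWithin_mono x hsub)
  haveI hne : (nhdsWithin x (Set.Ioc x b)).NeBot := by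
    rw [nhdsWithin_Ioc_eq_nhdsGT hxb]; infer_instance
  refine ge_of_tendsto ht2 ?_
  filter_upwards [self_mem_nhdsWithin] with y hy
  rw [slope_def_field]
  apply div_nonneg
  · exact sub_nonneg.2 (h y hy)
  · linarith [hy.1]

/-- the factor `v x * cot x + 2` is positive along a strictly decreasing solution -/
lemma Dpos {a b : ℝ} {v : ℝ → ℝ} (ha : 0 < a) (hab : a < b) (hb : b < π)
    (hd : ∀ β ∈ Set.Icc a b, HasDerivWithinAt v
      (-Real.cot β * v β * (v β ^ 2 + 1) - 2 * (v β ^ 2 + 1)) (Set.Icc a b) β)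
    (hm : StrictAntiOn v (Set.Icc a b)) (hva : 0 < v a) (hvb : v b < 0) :
    ∀ x ∈ Set.Icc a b, 0 < v x * Real.cot x + 2 := by
  have hd0 : ∀ x ∈ Set.Icc a b,
      -Real.cot x * v x * (v x ^ 2 + 1) - 2 * (v x ^ 2 + 1) ≤ 0 := by
    intro x hx
    rcases lt_or_eq_of_le hx.2 with hxb | hxb
    · have h0 := deriv_nonneg_right hx.1 hxb ((hd x hx).neg) (fun y hy => by
        have : v y < v x := hm hx ⟨hx.1.trans hy.1.le, hy.2⟩ hy.1
        show -v x ≤ -v y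
        linarith)
      linarith
    · apply deriv_nonpos_left (hxb ▸ hab) hx.2 (hd x hx)
      intro y hy
      exact (hm ⟨hy.1, hy.2.le.trans hx.2⟩ hx hy.2).le
  have hD0 : ∀ x ∈ Set.Icc a b, 0 ≤ v x * Real.cot x + 2 := by
    intro x hx
    by_contra hcon
    push_neg at hcon
    have h1 : (0:ℝ) < v x ^ 2 + 1 := by positivity
    have h2 := mul_pos h1 (show 0 < -(v x * Real.cot x + 2) by linarith)
    have h3 := hd0 x hx
    nlinarith
  intro x hx
  rcases (hD0 x hx).lt_or_eq with h | h
  · exact h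
  exfalso
  have hsx : 0 < Real.sin x :=
    Real.sin_pos_of_pos_of_lt_pi (ha.trans_le hx.1) (lt_of_le_of_lt hx.2 hb)
  have hvx : v x ≠ 0 := by
    intro h0
    rw [h0] at h
    norm_num at h
  have hgder : HasDerivWithinAt (fun y => v y * Real.cot y + 2)
      ((-Real.cot x * v x * (v x ^ 2 + 1) - 2 * (v x ^ 2 + 1)) * Real.cot x
        + v x * (-(1 / Real.sin x ^ 2))) (Set.Icc a b) x :=
    ((hd x hx).mul ((hasDerivAt_cot hsx.ne').hasDerivWithinAt)).add_const 2
  have hzero : -Real.cot x * v x * (v x ^ 2 + 1) - 2 * (v x ^ 2 + 1)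
      = -((v x ^ 2 + 1) * (v x * Real.cot x + 2)) := by ring
  have hgder2 : HasDerivWithinAt (fun y => v y * Real.cot y + 2)
      (v x * (-(1 / Real.sin x ^ 2))) (Set.Icc a b) x := by
    convert hgder using 1
    rw [hzero, ← h]
    ring
  have hpos : 0 < 1 / Real.sin x ^ 2 := by positivity
  rcases hvx.lt_or_gt with hv | hv
  · -- v x < 0 : x ≠ a, use left lemma : deriv ≤ 0, but deriv = -v x / sin² > 0
    have hxa : a < x := by
      rcases (lt_or_eq_of_le hx.1) with h' | h'
      · exact h'
      · exfalso; rw [← h'] at hv; linarith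
    have := deriv_nonpos_left hxa hx.2 hgder2 (fun y hy => by
      have := hD0 y ⟨hy.1, hy.2.le.trans hx.2⟩
      rw [← h] at *
      linarith)
    nlinarith
  · -- v x > 0 : x ≠ b
    have hxb : x < b := by
      rcases (lt_or_eq_of_le hx.2) with h' | h'
      · exact h'
      · exfalso; rw [h'] at hv; linarith
    have := deriv_nonneg_right hx.1 hxb hgder2 (fun y hy => by
      have := hD0 y ⟨hx.1.trans hy.1.le, hy.2⟩
      rw [← h] at *
      linarith)
    nlinarith

/-- comparison lemma : two solutions ordered at the left end stay ordered -/
lemma compare {a1 b1 a2 b2 s m : ℝ} {v₁ v₂ : ℝ → ℝ}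
    (h0 : 0 < s) (hmπ : m < π) (hsm : s ≤ m)
    (hsub1 : Set.Icc s m ⊆ Set.Icc a1 b1) (hsub2 : Set.Icc s m ⊆ Set.Icc a2 b2)
    (hd₁ : ∀ β ∈ Set.Icc a1 b1, HasDerivWithinAt v₁
      (-Real.cot β * v₁ β * (v₁ β ^ 2 + 1) - 2 * (v₁ β ^ 2 + 1)) (Set.Icc a1 b1) β)
    (hd₂ : ∀ β ∈ Set.Icc a2 b2, HasDerivWithinAt v₂
      (-Real.cot β * v₂ β * (v₂ β ^ 2 + 1) - 2 * (v₂ β ^ 2 + 1)) (Set.Icc a2 b2) β)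
    (hs : v₁ s < v₂ s) : ∀ x ∈ Set.Icc s m, v₁ x < v₂ x := by
  set w : ℝ → ℝ := fun x => v₂ x - v₁ x with hw_def
  set Q : ℝ → ℝ := fun x =>
    -(Real.cot x * ((v₂ x) ^ 2 + v₁ x * v₂ x + (v₁ x) ^ 2 + 1) + 2 * (v₁ x + v₂ x)) with hQ_def
  have hw : ∀ x ∈ Set.Icc s m, HasDerivWithinAt w (Q x * w x) (Set.Icc s m) x := by
    intro x hx
    have h1 := ((hd₂ x (hsub2 hx)).mono hsub2).sub ((hd₁ x (hsub1 hx)).mono hsub1)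
    convert h1 using 1
    · rfl
    · rfl
    · rfl
    simp only [hQ_def, hw_def]
    ring
  have hc₁ : ContinuousOn v₁ (Set.Icc s m) :=
    fun x hx => (((hd₁ x (hsub1 hx)).mono hsub1)).continuousWithinAt
  have hc₂ : ContinuousOn v₂ (Set.Icc s m) :=
    fun x hx => (((hd₂ x (hsub2 hx)).mono hsub2)).continuousWithinAt
  have hwc : ContinuousOn w (Set.Icc s m) := hc₂.sub hc₁
  have hQc : ContinuousOn Q (Set.Icc s m) := by
    apply ContinuousOn.neg
    apply ContinuousOn.add
    · exact (cot_continuousOn h0 hmπ).mul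
        ((((hc₂.pow 2).add (hc₁.mul hc₂)).add (hc₁.pow 2)).add continuousOn_const)
    · exact continuousOn_const.mul (hc₁.add hc₂)
  obtain ⟨L, hL⟩ := isCompact_Icc.exists_bound_of_continuousOn hQc
  by_contra hcon
  push_neg at hcon
  obtain ⟨x₀, hx₀, hwx₀⟩ := hcon
  have hwx₀' : w x₀ ≤ 0 := by simp only [hw_def]; linarith
  set S : Set ℝ := Set.Icc s m ∩ w ⁻¹' (Set.Iic 0) with hS_def
  have hS_closed : IsClosed S := hwc.preimage_isClosed_of_isClosed isClosed_Icc isClosed_Iic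
  have hS_ne : S.Nonempty := ⟨x₀, hx₀, hwx₀'⟩
  have hS_comp : IsCompact S := isCompact_Icc.of_isClosed_subset hS_closed inter_subset_left
  set c := sInf S with hc_def
  have hcS : c ∈ S := hS_comp.sInf_mem hS_ne
  have hws : 0 < w s := by simp only [hw_def]; linarith
  have hsc : s < c := by
    rcases lt_or_eq_of_le hcS.1.1 with h' | h'
    · exact h'
    · exfalso; have := hcS.2; rw [← h'] at this; simp at this; linarith
  have hwpos : ∀ y ∈ Set.Ico s c, 0 < w y := by
    intro y hy
    by_contra hcon2
    push_neg at hcon2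
    have : y ∈ S := ⟨⟨hy.1, hy.2.le.trans hcS.1.2⟩, hcon2⟩
    have := csInf_le hS_comp.bddBelow this
    linarith [hy.2]
  -- monotone trick
  set g : ℝ → ℝ := fun x => w x * Real.exp (L * x) with hg_def
  have hgmono : MonotoneOn g (Set.Icc s c) := by
    apply monotoneOn_of_deriv_nonneg (convex_Icc s c)
    · exact (hwc.mono (Icc_subset_Icc_right hcS.1.2)).mul
        (Real.continuous_exp.comp (continuous_const.mul continuous_id)).continuousOn
    · intro x hx
      rw [interior_Icc] at hx
      have hx' : x ∈ Set.Icc s m := ⟨hx.1.le, hx.2.le.trans hcS.1.2⟩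
      have hmem : Set.Icc s m ∈ nhds x :=
        Icc_mem_nhds hx.1 (lt_of_lt_of_le hx.2 hcS.1.2)
      have hwd : HasDerivAt w (Q x * w x) x := (hw x hx').hasDerivAt hmem
      have hexp : HasDerivAt (fun y => Real.exp (L * y)) (Real.exp (L * x) * L) x := by
        have := (Real.hasDerivAt_exp (L * x)).comp x ((hasDerivAt_id x).const_mul L)
        simpa [mul_comm, Function.comp_def] using this
      exact (hwd.mul hexp).differentiableAt.differentiableWithinAt
    · intro x hx
      rw [interior_Icc] at hx
      have hx' : x ∈ Set.Icc s m := ⟨hx.1.le, hx.2.le.trans hcS.1.2⟩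
      have hmem : Set.Icc s m ∈ nhds x :=
        Icc_mem_nhds hx.1 (lt_of_lt_of_le hx.2 hcS.1.2)
      have hwd : HasDerivAt w (Q x * w x) x := (hw x hx').hasDerivAt hmem
      have hexp : HasDerivAt (fun y => Real.exp (L * y)) (Real.exp (L * x) * L) x := by
        have := (Real.hasDerivAt_exp (L * x)).comp x ((hasDerivAt_id x).const_mul L)
        simpa [mul_comm, Function.comp_def] using this
      have hgd : HasDerivAt g (Q x * w x * Real.exp (L * x) + w x * (Real.exp (L * x) * L)) x :=
        hwd.mul hexp
      rw [hgd.deriv]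
      have h1 : 0 < w x := hwpos x ⟨hx.1.le, hx.2⟩
      have h2 : -L ≤ Q x := by
        have := hL x hx'
        rw [Real.norm_eq_abs] at this
        linarith [abs_le.1 this]
      have h3 : 0 < Real.exp (L * x) := Real.exp_pos _
      nlinarith [mul_nonneg (mul_pos h1 h3).le (show (0:ℝ) ≤ Q x + L by linarith)]
  have h4 := hgmono (left_mem_Icc.2 hsc.le) (right_mem_Icc.2 hsc.le) hsc.le
  have h5 : 0 < g s := mul_pos hws (Real.exp_pos _)
  have h6 : g c ≤ 0 := mul_nonpos_of_nonpos_of_nonneg hcS.2 (Real.exp_pos _).le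
  linarith

/-- continuity of an inverse function on a compact domain -/
lemma inv_cont {a b : ℝ} {v ψ : ℝ → ℝ} {J : Set ℝ}
    (hv : ContinuousOn v (Set.Icc a b)) (hinj : Set.InjOn v (Set.Icc a b))
    (hψmem : ∀ y ∈ J, ψ y ∈ Set.Icc a b) (hψv : ∀ y ∈ J, v (ψ y) = y) :
    ContinuousOn ψ J := by
  intro y₀ hy₀
  rw [Metric.continuousWithinAt_iff]
  intro ε hε
  set K : Set ℝ := Set.Icc a b ∩ {x | ε ≤ |x - ψ y₀|} with hK_def
  have hK_closed : IsClosed K := by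
    apply IsClosed.inter isClosed_Icc
    have h1 : {x : ℝ | ε ≤ |x - ψ y₀|} = (fun x => |x - ψ y₀|) ⁻¹' Set.Ici ε := rfl
    rw [h1]
    exact IsClosed.preimage ((continuous_id.sub continuous_const).abs) isClosed_Ici
  have hK_comp : IsCompact K := isCompact_Icc.of_isClosed_subset hK_closed inter_subset_left
  by_cases hK : K.Nonempty
  · have hcont : ContinuousOn (fun x => |v x - y₀|) K :=
      ((hv.mono inter_subset_left).sub continuousOn_const).abs
    obtain ⟨xm, hxmK, hxmmin⟩ := hK_comp.exists_isMinOn hK hcont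
    set δ := |v xm - y₀| with hδ_def
    have hδpos : 0 < δ := by
      rcases (abs_nonneg (v xm - y₀)).lt_or_eq with h | h
      · exact h
      · exfalso
        have h2 : v xm = y₀ := by
          have := abs_eq_zero.1 h.symm
          linarith
        have h3 : v xm = v (ψ y₀) := by rw [h2, hψv y₀ hy₀]
        have h4 : xm = ψ y₀ := hinj hxmK.1 (hψmem y₀ hy₀) h3
        have h5 := hxmK.2
        rw [h4] at h5
        simp at h5
        linarith
    refine ⟨δ, hδpos, fun y hy hdist => ?_⟩
    rw [Real.dist_eq] at hdist ⊢
    by_contra hcon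
    push_neg at hcon
    have h6 : ψ y ∈ K := ⟨hψmem y hy, hcon⟩
    have h7 := hxmmin h6
    simp only [Set.mem_setOf_eq] at h7
    rw [hψv y hy] at h7
    -- h7 : δ ≤ |y - y₀|
    exact absurd hdist (not_lt.2 h7)
  · refine ⟨1, one_pos, fun y hy _ => ?_⟩
    have h1 := hψmem y hy
    by_contra hcon
    push_neg at hcon
    rw [Real.dist_eq] at hcon
    exact hK ⟨ψ y, h1, hcon⟩

end PolarCatAux

open PolarCatAux

/-- ODE form of the monotonicity of the exit data (Proposition 2.7): for two strictly
decreasing solutions of the polar catenary equation on `[βin, βex]` with `v(βin) > 0 >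
v(βex)` and `∫ v = 0`, increasing the entry latitude (at equal entry value) or the entry
value (at equal entry latitude) strictly increases the exit latitude and strictly
decreases the exit value. -/
theorem polar_catenary_exit_monotone
    (b1in b1ex b2in b2ex : ℝ)
    (h1a : 0 < b1in) (h1b : b1in < b1ex) (h1c : b1ex < π)
    (h2a : 0 < b2in) (h2b : b2in < b2ex) (h2c : b2ex < π)
    (v₁ v₂ : ℝ → ℝ)
    (hd₁ : ∀ β ∈ Set.Icc b1in b1ex,
      HasDerivWithinAt v₁
        (-Real.cot β * v₁ β * (v₁ β ^ 2 + 1) - 2 * (v₁ β ^ 2 + 1))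
        (Set.Icc b1in b1ex) β)
    (hd₂ : ∀ β ∈ Set.Icc b2in b2ex,
      HasDerivWithinAt v₂
        (-Real.cot β * v₂ β * (v₂ β ^ 2 + 1) - 2 * (v₂ β ^ 2 + 1))
        (Set.Icc b2in b2ex) β)
    (hm₁ : StrictAntiOn v₁ (Set.Icc b1in b1ex))
    (hm₂ : StrictAntiOn v₂ (Set.Icc b2in b2ex))
    (hs₁ : 0 < v₁ b1in) (hs₁' : v₁ b1ex < 0)
    (hs₂ : 0 < v₂ b2in) (hs₂' : v₂ b2ex < 0)
    (hi₁ : ∫ β in b1in..b1ex, v₁ β = 0)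
    (hi₂ : ∫ β in b2in..b2ex, v₂ β = 0)
    (hcmp : (b1in < b2in ∧ v₁ b1in = v₂ b2in) ∨ (b1in = b2in ∧ v₁ b1in < v₂ b2in)) :
    b1ex < b2ex ∧ v₂ b2ex < v₁ b1ex := by
  have hc₁ : ContinuousOn v₁ (Set.Icc b1in b1ex) := fun x hx => (hd₁ x hx).continuousWithinAt
  have hc₂ : ContinuousOn v₂ (Set.Icc b2in b2ex) := fun x hx => (hd₂ x hx).continuousWithinAt
  have hD₁ := PolarCatAux.Dpos h1a h1b h1c hd₁ hm₁ hs₁ hs₁'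
  have hD₂ := PolarCatAux.Dpos h2a h2b h2c hd₂ hm₂ hs₂ hs₂'
  have hble : b1in ≤ b2in := by
    rcases hcmp with ⟨h, _⟩ | ⟨h, _⟩
    exacts [h.le, h.le]
  have hVle : v₁ b1in ≤ v₂ b2in := by
    rcases hcmp with ⟨_, h⟩ | ⟨_, h⟩
    exacts [h.le, h.le]
  have hover : b2in ≤ b1ex → v₁ b2in < v₂ b2in := by
    intro hob
    rcases hcmp with ⟨h, heq⟩ | ⟨heq, h⟩
    · have h2 : v₁ b2in < v₁ b1in :=
        hm₁ ⟨le_refl _, h1b.le⟩ ⟨h.le, hob⟩ h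
      linarith [heq]
    · rw [← heq] at h
      rw [← heq]
      exact h
  have hcomp : ∀ x ∈ Set.Icc b2in (min b1ex b2ex), v₁ x < v₂ x := by
    intro x hx
    have hob : b2in ≤ b1ex := hx.1.trans (hx.2.trans (min_le_left _ _))
    refine PolarCatAux.compare h2a (lt_of_le_of_lt (min_le_right _ _) h2c)
      (le_min hob h2b.le) ?_ ?_ hd₁ hd₂ (hover hob) x hx
    · exact fun y hy => ⟨hble.trans hy.1, hy.2.trans (min_le_left _ _)⟩
    · exact fun y hy => ⟨hy.1, hy.2.trans (min_le_right _ _)⟩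
  -- main step : exit-value comparison
  have hG2 : v₂ b2ex < v₁ b1ex := by
    by_contra hEcon
    push_neg at hEcon
    -- hEcon : v₁ b1ex ≤ v₂ b2ex
    obtain ⟨c, hcmem, hcval⟩ : ∃ c ∈ Set.Icc b2in b2ex, v₂ c = v₁ b1in := by
      have h1 : v₁ b1in ∈ Set.Icc (v₂ b2ex) (v₂ b2in) := ⟨by linarith, hVle⟩
      obtain ⟨c, hc1, hc2⟩ := intermediate_value_Icc' h2b.le hc₂ h1
      exact ⟨c, hc1, hc2⟩
    have hcb2ex : c < b2ex := by
      rcases lt_or_eq_of_le hcmem.2 with h | h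
      · exact h
      · exfalso; rw [h] at hcval; linarith
    have hIVT : ∀ y ∈ Set.Icc (v₁ b1ex) (v₁ b1in),
        ∃ u, u ∈ Set.Icc b1in b1ex ∧ v₁ u = y := by
      intro y hy
      obtain ⟨u, hu1, hu2⟩ := intermediate_value_Icc' h1b.le hc₁ hy
      exact ⟨u, hu1, hu2⟩
    choose! ψ hψmem hψval using hIVT
    have hψcont : ContinuousOn ψ (Set.Icc (v₁ b1ex) (v₁ b1in)) :=
      PolarCatAux.inv_cont hc₁ hm₁.injOn hψmem hψval
    set φ : ℝ → ℝ := fun β => ψ (v₂ β) with hφ_def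
    have hv₂memJ : ∀ β ∈ Set.Icc c b2ex, v₂ β ∈ Set.Icc (v₁ b1ex) (v₁ b1in) := by
      intro β hβ
      have hβ2 : β ∈ Set.Icc b2in b2ex := ⟨hcmem.1.trans hβ.1, hβ.2⟩
      constructor
      · refine hEcon.trans ?_
        rcases lt_or_eq_of_le hβ.2 with h | h
        · exact (hm₂ hβ2 (right_mem_Icc.2 h2b.le) h).le
        · rw [h]
      · rw [← hcval]
        rcases lt_or_eq_of_le hβ.1 with h | h
        · exact (hm₂ ⟨hcmem.1, hcb2ex.le⟩ hβ2 h).le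
        · rw [h]
    have hφmem : ∀ β ∈ Set.Icc c b2ex, φ β ∈ Set.Icc b1in b1ex :=
      fun β hβ => hψmem _ (hv₂memJ β hβ)
    have hφval : ∀ β ∈ Set.Icc c b2ex, v₁ (φ β) = v₂ β :=
      fun β hβ => hψval _ (hv₂memJ β hβ)
    have hcIcc : c ∈ Set.Icc c b2ex := left_mem_Icc.2 hcb2ex.le
    have hexIcc : b2ex ∈ Set.Icc c b2ex := right_mem_Icc.2 hcb2ex.le
    have hφc : φ c = b1in := by
      apply hm₁.injOn (hφmem c hcIcc) (left_mem_Icc.2 h1b.le)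
      rw [hφval c hcIcc, hcval]
    have hdmem : φ b2ex ∈ Set.Icc b1in b1ex := hφmem b2ex hexIcc
    have hdval : v₁ (φ b2ex) = v₂ b2ex := hφval b2ex hexIcc
    have hφlt : ∀ β ∈ Set.Icc c b2ex, φ β < β := by
      intro β hβ
      by_cases hβ1 : β ≤ b1ex
      · have hβm : β ∈ Set.Icc b2in (min b1ex b2ex) :=
          ⟨hcmem.1.trans hβ.1, le_min hβ1 hβ.2⟩
        have h1 : v₁ β < v₁ (φ β) := by
          rw [hφval β hβ]; exact hcomp β hβm
        have hβIcc : β ∈ Set.Icc b1in b1ex := ⟨hble.trans (hcmem.1.trans hβ.1), hβ1⟩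
        exact (hm₁.lt_iff_gt hβIcc (hφmem β hβ)).1 h1
      · push_neg at hβ1
        exact lt_of_le_of_lt (hφmem β hβ).2 hβ1
    have hsubIcc : Set.Icc c b2ex ⊆ Set.Icc b2in b2ex :=
      fun y hy => ⟨hcmem.1.trans hy.1, hy.2⟩
    have hφcont : ContinuousOn φ (Set.Icc c b2ex) :=
      hψcont.comp (hc₂.mono hsubIcc) (fun β hβ => hv₂memJ β hβ)
    set Φ' : ℝ → ℝ := fun β => (v₂ β * Real.cot β + 2) / (v₂ β * Real.cot (φ β) + 2)
      with hΦ'_def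
    have hden : ∀ β ∈ Set.Icc c b2ex, 0 < v₂ β * Real.cot (φ β) + 2 := by
      intro β hβ
      have h1 := hD₁ (φ β) (hφmem β hβ)
      rwa [hφval β hβ] at h1
    have hnum : ∀ β ∈ Set.Icc c b2ex, 0 < v₂ β * Real.cot β + 2 :=
      fun β hβ => hD₂ β (hsubIcc hβ)
    have hc_pos : 0 < c := h2a.trans_le hcmem.1
    have hΦ'cont : ContinuousOn Φ' (Set.Icc c b2ex) := by
      apply ContinuousOn.div
      · exact ((hc₂.mono hsubIcc).mul
          ((PolarCatAux.cot_continuousOn hc_pos h2c).mono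
            (fun y hy => ⟨hy.1, hy.2⟩))).add continuousOn_const
      · exact ((hc₂.mono hsubIcc).mul
          ((PolarCatAux.cot_continuousOn h1a h1c).comp hφcont hφmem)).add continuousOn_const
      · exact fun β hβ => (hden β hβ).ne'
    have hφderiv : ∀ x ∈ Set.Ioo c b2ex, HasDerivWithinAt φ (Φ' x) (Set.Ioi x) x := by
      intro x hx
      have hxIcc : x ∈ Set.Icc c b2ex := ⟨hx.1.le, hx.2.le⟩
      have hx2 : x ∈ Set.Icc b2in b2ex := hsubIcc hxIcc
      have hy₀mem : v₂ x ∈ Set.Ioo (v₁ b1ex) (v₁ b1in) := by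
        constructor
        · exact lt_of_le_of_lt hEcon (hm₂ hx2 (right_mem_Icc.2 h2b.le) hx.2)
        · rw [← hcval]; exact hm₂ ⟨hcmem.1, hcb2ex.le⟩ hx2 hx.1
      have hy₀Icc : v₂ x ∈ Set.Icc (v₁ b1ex) (v₁ b1in) := Ioo_subset_Icc_self hy₀mem
      have hψmem' := hψmem _ hy₀Icc
      have hψval' := hψval _ hy₀Icc
      have hψy₀ : ψ (v₂ x) ∈ Set.Ioo b1in b1ex := by
        constructor
        · rcases lt_or_eq_of_le hψmem'.1 with h | h
          · exact h
          · exfalso; rw [← h] at hψval'; linarith [hy₀mem.2]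
        · rcases lt_or_eq_of_le hψmem'.2 with h | h
          · exact h
          · exfalso; rw [h] at hψval'; linarith [hy₀mem.1]
      have hv₁der : HasDerivAt v₁
          (-Real.cot (ψ (v₂ x)) * v₁ (ψ (v₂ x)) * (v₁ (ψ (v₂ x)) ^ 2 + 1)
            - 2 * (v₁ (ψ (v₂ x)) ^ 2 + 1)) (ψ (v₂ x)) :=
        (hd₁ _ hψmem').hasDerivAt (Icc_mem_nhds hψy₀.1 hψy₀.2)
      have hDψ : 0 < v₂ x * Real.cot (ψ (v₂ x)) + 2 := hden x hxIcc
      have hF1ne : -Real.cot (ψ (v₂ x)) * v₁ (ψ (v₂ x)) * (v₁ (ψ (v₂ x)) ^ 2 + 1)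
          - 2 * (v₁ (ψ (v₂ x)) ^ 2 + 1) ≠ 0 := by
        rw [hψval']
        have h1 : (0:ℝ) < (v₂ x) ^ 2 + 1 := by positivity
        nlinarith [mul_pos h1 hDψ]
      have hψcontAt : ContinuousAt ψ (v₂ x) :=
        (hψcont _ hy₀Icc).continuousAt (Icc_mem_nhds hy₀mem.1 hy₀mem.2)
      have hfg : ∀ᶠ y in nhds (v₂ x), v₁ (ψ y) = y := by
        filter_upwards [Icc_mem_nhds hy₀mem.1 hy₀mem.2] with y hy
        exact hψval y hy
      have hψder := HasDerivAt.of_local_left_inverse hψcontAt hv₁der hF1ne hfg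
      have hv₂der : HasDerivAt v₂
          (-Real.cot x * v₂ x * (v₂ x ^ 2 + 1) - 2 * (v₂ x ^ 2 + 1)) x :=
        (hd₂ x hx2).hasDerivAt (Icc_mem_nhds (lt_of_le_of_lt hcmem.1 hx.1) hx.2)
      have hφder := hψder.comp x hv₂der
      have heq : (-Real.cot (ψ (v₂ x)) * v₁ (ψ (v₂ x)) * (v₁ (ψ (v₂ x)) ^ 2 + 1)
            - 2 * (v₁ (ψ (v₂ x)) ^ 2 + 1))⁻¹
          * (-Real.cot x * v₂ x * (v₂ x ^ 2 + 1) - 2 * (v₂ x ^ 2 + 1)) = Φ' x := by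
        have hA : ((v₂ x) ^ 2 + 1 : ℝ) ≠ 0 := by positivity
        rw [hΦ'_def]
        simp only
        rw [hψval']
        rw [show (-Real.cot (ψ (v₂ x)) * v₂ x * (v₂ x ^ 2 + 1) - 2 * (v₂ x ^ 2 + 1))
            = -((v₂ x ^ 2 + 1) * (v₂ x * Real.cot (ψ (v₂ x)) + 2)) from by ring,
          show (-Real.cot x * v₂ x * (v₂ x ^ 2 + 1) - 2 * (v₂ x ^ 2 + 1))
            = -((v₂ x ^ 2 + 1) * (v₂ x * Real.cot x + 2)) from by ring]
        rw [eq_div_iff hDψ.ne']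
        have hne2 : -((v₂ x ^ 2 + 1) * (v₂ x * Real.cot (ψ (v₂ x)) + 2)) ≠ 0 :=
          neg_ne_zero.2 (mul_ne_zero hA hDψ.ne')
        field_simp
      have hres : HasDerivAt φ (Φ' x) x := by
        rw [← heq]
        exact hφder
      exact hres.hasDerivWithinAt
    -- change of variables
    have himg : φ '' Set.Icc c b2ex ⊆ Set.Icc b1in b1ex := Set.image_subset_iff.2 hφmem
    have huIcc : Set.uIcc c b2ex = Set.Icc c b2ex := Set.uIcc_of_le hcb2ex.le
    have hsubst : ∫ x in c..b2ex, Φ' x * v₂ x = ∫ u in b1in..(φ b2ex), v₁ u := by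
      have h1 := intervalIntegral.integral_comp_smul_deriv'' (f := φ) (f' := Φ') (g := v₁)
        (by rw [huIcc]; exact hφcont)
        (by rw [min_eq_left hcb2ex.le, max_eq_right hcb2ex.le]; exact hφderiv)
        (by rw [huIcc]; exact hΦ'cont)
        (by rw [huIcc]; exact hc₁.mono himg)
      rw [hφc] at h1
      rw [← h1]
      apply intervalIntegral.integral_congr
      intro x hx
      rw [huIcc] at hx
      simp only [smul_eq_mul, Function.comp_apply]
      rw [hφval x hx]
    -- sign facts
    have hint2a : IntervalIntegrable v₂ MeasureTheory.volume b2in c := by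
      apply ContinuousOn.intervalIntegrable
      apply hc₂.mono
      rw [Set.uIcc_of_le hcmem.1]
      exact fun y hy => ⟨hy.1, hy.2.trans hcmem.2⟩
    have hint2b : IntervalIntegrable v₂ MeasureTheory.volume c b2ex := by
      apply ContinuousOn.intervalIntegrable
      apply hc₂.mono
      rw [huIcc]
      exact hsubIcc
    have hsplit2 := intervalIntegral.integral_add_adjacent_intervals hint2a hint2b
    rw [hi₂] at hsplit2
    have hpos2 : 0 ≤ ∫ x in b2in..c, v₂ x := by
      apply intervalIntegral.integral_nonneg hcmem.1
      intro u hu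
      have h1 : v₂ c ≤ v₂ u := by
        rcases lt_or_eq_of_le hu.2 with h | h
        · exact (hm₂ ⟨hu.1, hu.2.trans hcmem.2⟩ ⟨hcmem.1, hcmem.2⟩ h).le
        · rw [h]
      rw [hcval] at h1
      linarith
    have hB : (∫ x in c..b2ex, v₂ x) ≤ 0 := by linarith
    -- A ≥ 0
    have hint1a : IntervalIntegrable v₁ MeasureTheory.volume b1in (φ b2ex) := by
      apply ContinuousOn.intervalIntegrable
      apply hc₁.mono
      rw [Set.uIcc_of_le hdmem.1]
      exact fun y hy => ⟨hy.1, hy.2.trans hdmem.2⟩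
    have hint1b : IntervalIntegrable v₁ MeasureTheory.volume (φ b2ex) b1ex := by
      apply ContinuousOn.intervalIntegrable
      apply hc₁.mono
      rw [Set.uIcc_of_le hdmem.2]
      exact fun y hy => ⟨hdmem.1.trans hy.1, hy.2⟩
    have hsplit1 := intervalIntegral.integral_add_adjacent_intervals hint1a hint1b
    rw [hi₁] at hsplit1
    have hneg1 : 0 ≤ ∫ u in (φ b2ex)..b1ex, -v₁ u := by
      apply intervalIntegral.integral_nonneg hdmem.2
      intro u hu
      have h1 : v₁ u ≤ v₁ (φ b2ex) := by
        rcases lt_or_eq_of_le hu.1 with h | h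
        · exact (hm₁ hdmem ⟨hdmem.1.trans hu.1, hu.2⟩ h).le
        · rw [← h]
      rw [hdval] at h1
      linarith
    rw [intervalIntegral.integral_neg] at hneg1
    have hA : 0 ≤ ∫ u in b1in..(φ b2ex), v₁ u := by linarith
    -- pointwise comparison of integrands
    have hle : ∀ x ∈ Set.Icc c b2ex, Φ' x * v₂ x ≤ v₂ x := by
      intro x hx
      have hn := hnum x hx
      have hm' := hden x hx
      have hφx := hφlt x hx
      have hφx0 : 0 < φ x := h1a.trans_le (hφmem x hx).1
      have hxπ : x < π := lt_of_le_of_lt hx.2 h2c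
      have hcot : Real.cot x < Real.cot (φ x) := PolarCatAux.cot_lt_cot hφx0 hφx hxπ
      rw [hΦ'_def]
      simp only
      rw [div_mul_eq_mul_div, div_le_iff₀ hm']
      nlinarith [mul_nonneg (sq_nonneg (v₂ x)) (sub_nonneg.2 hcot.le)]
    have hltpt : Φ' b2ex * v₂ b2ex < v₂ b2ex := by
      have hn := hnum b2ex hexIcc
      have hm' := hden b2ex hexIcc
      have hφx := hφlt b2ex hexIcc
      have hφx0 : 0 < φ b2ex := h1a.trans_le hdmem.1
      have hcot : Real.cot b2ex < Real.cot (φ b2ex) :=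
        PolarCatAux.cot_lt_cot hφx0 hφx h2c
      rw [hΦ'_def]
      simp only
      rw [div_mul_eq_mul_div, div_lt_iff₀ hm']
      nlinarith [mul_pos (mul_pos (neg_pos.2 hs₂') (neg_pos.2 hs₂'))
        (sub_pos.2 hcot)]
    have hstrict := intervalIntegral.integral_lt_integral_of_continuousOn_of_le_of_exists_lt
      hcb2ex (hΦ'cont.mul (hc₂.mono hsubIcc)) (hc₂.mono hsubIcc)
      (fun x hx => hle x ⟨hx.1.le, hx.2⟩) ⟨b2ex, hexIcc, hltpt⟩
    simp only [Pi.mul_apply] at hstrict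
    rw [hsubst] at hstrict
    linarith
  -- exit latitude comparison
  obtain ⟨e, hemem, heval⟩ : ∃ e ∈ Set.Icc b2in b2ex, v₂ e = v₁ b1ex := by
    have h1 : v₁ b1ex ∈ Set.Icc (v₂ b2ex) (v₂ b2in) := ⟨hG2.le, by linarith⟩
    obtain ⟨e, he1, he2⟩ := intermediate_value_Icc' h2b.le hc₂ h1
    exact ⟨e, he1, he2⟩
  have hbe : b1ex < e := by
    by_contra hcon
    push_neg at hcon
    have hem : e ∈ Set.Icc b2in (min b1ex b2ex) := ⟨hemem.1, le_min hcon hemem.2⟩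
    have h2 : v₁ e < v₂ e := hcomp e hem
    rw [heval] at h2
    have heIcc : e ∈ Set.Icc b1in b1ex := ⟨hble.trans hemem.1, hcon⟩
    have h3 := (hm₁.lt_iff_gt heIcc (right_mem_Icc.2 h1b.le)).1 h2
    linarith
  exact ⟨lt_of_lt_of_le hbe hemem.2, hG2⟩
end

section
/- For all real numbers z₁, z₂ with z₂ < z₁ and z₁ − z₂ ≤ 2, one has tanh(z₁) − tanh(z₂) + (z₁ − z₂)·tanh(z₁)·tanh(z₂) > 0. -/
open Real

lemma tanh_lt_one' (x : ℝ) : Real.tanh x < 1 := by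
  rw [Real.tanh_eq_sinh_div_cosh, div_lt_one (Real.cosh_pos x)]
  nlinarith [Real.cosh_sub_sinh x, Real.exp_pos (-x)]

lemma neg_one_lt_tanh' (x : ℝ) : -1 < Real.tanh x := by
  rw [Real.tanh_eq_sinh_div_cosh, lt_div_iff₀ (Real.cosh_pos x)]
  nlinarith [Real.cosh_add_sinh x, Real.exp_pos x]

lemma tanh_strict (x y : ℝ) (h : x < y) : Real.tanh x < Real.tanh y := by
  rw [Real.tanh_eq_sinh_div_cosh, Real.tanh_eq_sinh_div_cosh,
    div_lt_div_iff₀ (Real.cosh_pos x) (Real.cosh_pos y)]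
  have := Real.sinh_sub y x
  have hs : 0 < Real.sinh (y - x) := Real.sinh_pos_iff.2 (by linarith)
  nlinarith

/-- For `z₂ < z₁` with `z₁ − z₂ ≤ 2`,
`tanh z₁ − tanh z₂ + (z₁ − z₂)·tanh z₁·tanh z₂ > 0`. -/
theorem tanh_dirichlet_determinant_pos (z₁ z₂ : ℝ) (h : z₂ < z₁) (h2 : z₁ - z₂ ≤ 2) :
    0 < Real.tanh z₁ - Real.tanh z₂ + (z₁ - z₂) * Real.tanh z₁ * Real.tanh z₂ := by
  set t₁ := Real.tanh z₁ with ht₁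
  set t₂ := Real.tanh z₂ with ht₂
  have hm : t₂ < t₁ := tanh_strict z₂ z₁ h
  have h1 : t₁ < 1 := tanh_lt_one' z₁
  have h1' : -1 < t₁ := neg_one_lt_tanh' z₁
  have h2' : t₂ < 1 := tanh_lt_one' z₂
  have h2'' : -1 < t₂ := neg_one_lt_tanh' z₂
  have hd : 0 < z₁ - z₂ := by linarith
  rcases le_or_gt 0 (t₁ * t₂) with hp | hp
  · have : 0 ≤ (z₁ - z₂) * (t₁ * t₂) := mul_nonneg hd.le hp
    nlinarith
  · have ht1p : 0 < t₁ := by nlinarith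
    have ht2n : t₂ < 0 := by nlinarith
    have key : (z₁ - z₂) * (t₁ * t₂) ≥ 2 * (t₁ * t₂) := by nlinarith
    nlinarith [mul_pos ht1p (by linarith : (0:ℝ) < 1 + t₂),
      mul_pos (by linarith : (0:ℝ) < -t₂) (by linarith : (0:ℝ) < 1 - t₁)]
end

section
/- Let a > 0, b ∈ ℝ, and let y₂ < y₁ be real numbers with y₁ − y₂ ≤ 2a. If u : [y₂, y₁] → ℝ is twice differentiable and satisfies u''(y) + (2/a²)·sech²((y − b)/a)·u(y) = 0 for all y ∈ [y₂, y₁] together with u(y₁) = u(y₂) = 0, then u is identically zero on [y₂, y₁]. -/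
open Real

private lemma catenoid_key (a b y₁ y₂ : ℝ) (ha : 0 < a)
    (hy : y₂ < y₁) (hgap : y₁ - y₂ ≤ 2 * a)
    (u u' u'' : ℝ → ℝ)
    (hu : ∀ y ∈ Set.Icc y₂ y₁, HasDerivWithinAt u (u' y) (Set.Icc y₂ y₁) y)
    (hu' : ∀ y ∈ Set.Icc y₂ y₁, HasDerivWithinAt u' (u'' y) (Set.Icc y₂ y₁) y)
    (hode : ∀ y ∈ Set.Icc y₂ y₁,
      u'' y + (2 / a ^ 2) * (1 / Real.cosh ((y - b) / a)) ^ 2 * u y = 0)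
    (hb1 : u y₁ = 0) (hb2 : u y₂ = 0) :
    ∀ y ∈ Set.Icc y₂ y₁, u y ≤ 0 := by
  by_contra hcon
  push_neg at hcon
  obtain ⟨y₀, hy₀I, hy₀⟩ := hcon
  set k : ℝ := 3 / (2 * a) with hk
  have hk0 : 0 < k := by positivity
  set m : ℝ := (y₂ + y₁) / 2 with hm
  set q : ℝ → ℝ := fun y => (2 / a ^ 2) * (1 / Real.cosh ((y - b) / a)) ^ 2 with hqdef
  set w : ℝ → ℝ := fun y => Real.cos (k * (y - m)) with hwdef
  set w' : ℝ → ℝ := fun y => -Real.sin (k * (y - m)) * k with hw'def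
  have ha2 : (0:ℝ) < a ^ 2 := by positivity
  -- the potential is strictly below k^2
  have hq_lt : ∀ y : ℝ, q y < k ^ 2 := by
    intro y
    have hc := Real.one_le_cosh ((y - b) / a)
    have hc0 : (0:ℝ) < Real.cosh ((y - b) / a) := by linarith
    have h1 : (1 / Real.cosh ((y - b) / a)) ^ 2 ≤ 1 := by
      rw [div_pow, one_pow]
      apply div_le_one_of_le₀ <;> nlinarith
    have h2 : q y ≤ 2 / a ^ 2 := by
      have h3 : (0:ℝ) < 2 / a ^ 2 := by positivity
      calc q y = (2 / a ^ 2) * (1 / Real.cosh ((y - b) / a)) ^ 2 := rfl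
        _ ≤ (2 / a ^ 2) * 1 := by nlinarith [sq_nonneg (1 / Real.cosh ((y - b) / a))]
        _ = 2 / a ^ 2 := by ring
    have h4 : 2 / a ^ 2 < k ^ 2 := by
      rw [hk, div_pow, div_lt_div_iff₀ ha2 (by positivity)]
      nlinarith
    linarith
  -- w is positive on the interval
  have hw_pos : ∀ y ∈ Set.Icc y₂ y₁, 0 < w y := by
    intro y hyI
    have h1 : -(3/2 : ℝ) ≤ k * (y - m) ∧ k * (y - m) ≤ 3/2 := by
      have hA : -(a) ≤ y - m := by
        have := hyI.1; rw [hm]; nlinarith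
      have hB : y - m ≤ a := by
        have := hyI.2; rw [hm]; nlinarith
      constructor
      · have : k * (-a) ≤ k * (y - m) := by nlinarith
        have hk3 : k * a = 3 / 2 := by rw [hk]; field_simp
        nlinarith
      · have : k * (y - m) ≤ k * a := by nlinarith
        have hk3 : k * a = 3 / 2 := by rw [hk]; field_simp
        nlinarith
    have hpi : (3:ℝ)/2 < π / 2 := by
      have := Real.pi_gt_three; linarith
    exact Real.cos_pos_of_mem_Ioo ⟨by linarith [h1.1], by linarith [h1.2]⟩
  -- derivatives of w
  have hlin : ∀ y : ℝ, HasDerivAt (fun y => k * (y - m)) k y := by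
    intro y
    simpa using ((hasDerivAt_id y).sub_const m).const_mul k
  have hw : ∀ y : ℝ, HasDerivAt w (w' y) y := by
    intro y
    simpa [hw'def] using (hlin y).cos
  have hw' : ∀ y : ℝ, HasDerivAt w' (-(k ^ 2) * w y) y := by
    intro y
    have := ((hlin y).sin.neg).mul_const k
    refine this.congr_deriv ?_
    simp [hwdef]; ring
  -- h = Wronskian-type quantity
  set h : ℝ → ℝ := fun y => u' y * w y - u y * w' y with hhdef
  have hh : ∀ y ∈ Set.Icc y₂ y₁,
      HasDerivWithinAt h (u y * w y * (k ^ 2 - q y)) (Set.Icc y₂ y₁) y := by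
    intro y hyI
    have H := ((hu' y hyI).mul (hw y).hasDerivWithinAt).sub
      ((hu y hyI).mul (hw' y).hasDerivWithinAt)
    refine H.congr_deriv ?_
    have hode' : u'' y = -(q y) * u y := by
      have := hode y hyI; simp only [hqdef]; linarith
    rw [hode']; ring
  -- continuity
  have hucont : ContinuousOn u (Set.Icc y₂ y₁) := fun y hyI => (hu y hyI).continuousWithinAt
  have hu'cont : ContinuousOn u' (Set.Icc y₂ y₁) := fun y hyI => (hu' y hyI).continuousWithinAt
  have hklin : Continuous (fun y : ℝ => k * (y - m)) :=
    continuous_const.mul (continuous_id.sub continuous_const)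
  have hwcont : Continuous w := Real.continuous_cos.comp hklin
  have hw'cont : Continuous w' :=
    ((Real.continuous_sin.comp hklin).neg).mul continuous_const
  have hhcont : ContinuousOn h (Set.Icc y₂ y₁) :=
    (hu'cont.mul hwcont.continuousOn).sub (hucont.mul hw'cont.continuousOn)
  set g : ℝ → ℝ := fun y => u y / w y with hgdef
  have hgcont : ContinuousOn g (Set.Icc y₂ y₁) :=
    hucont.div hwcont.continuousOn (fun y hyI => (hw_pos y hyI).ne')
  -- maximum of g
  obtain ⟨c, hcI, hcmax⟩ := isCompact_Icc.exists_isMaxOn ⟨y₀, hy₀I⟩ hgcont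
  have hgc0 : 0 < g c := by
    have h1 : 0 < g y₀ := div_pos hy₀ (hw_pos y₀ hy₀I)
    exact lt_of_lt_of_le h1 (hcmax hy₀I)
  have hwc := hw_pos c hcI
  have huc : 0 < u c := by
    have h1 : g c * w c = u c := div_mul_cancel₀ _ hwc.ne'
    nlinarith
  have hc2 : y₂ < c := by
    rcases eq_or_lt_of_le hcI.1 with h | h
    · exfalso; rw [← h] at huc; linarith [hb2 ▸ huc]
    · exact h
  have hc1 : c < y₁ := by
    rcases eq_or_lt_of_le hcI.2 with h | h
    · exfalso; rw [h] at huc; linarith [hb1 ▸ huc]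
    · exact h
  have hIcc_nhds : Set.Icc y₂ y₁ ∈ nhds c := Icc_mem_nhds hc2 hc1
  -- derivative of g at c is zero, hence h c = 0
  have huc_at : HasDerivAt u (u' c) c := (hu c hcI).hasDerivAt hIcc_nhds
  have hgc_at : HasDerivAt g ((u' c * w c - u c * w' c) / (w c) ^ 2) c :=
    huc_at.div (hw c) hwc.ne'
  have hlocmax : IsLocalMax g c := hcmax.isLocalMax hIcc_nhds
  have hder0 : (u' c * w c - u c * w' c) / (w c) ^ 2 = 0 :=
    hlocmax.hasDerivAt_eq_zero hgc_at
  have hhc : h c = 0 := by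
    rcases div_eq_zero_iff.mp hder0 with h1 | h1
    · exact h1
    · exact absurd h1 (pow_ne_zero 2 hwc.ne')
  -- find δ > 0 where u > 0 on [c, c+δ] and c+δ ≤ y₁
  have hev : ∀ᶠ x in nhds c, 0 < u x :=
    huc_at.continuousAt.eventually (eventually_gt_nhds huc)
  obtain ⟨ε, hε, hball⟩ := Metric.eventually_nhds_iff.mp hev
  set δ : ℝ := min (ε / 2) ((y₁ - c) / 2) with hδdef
  have hδ : 0 < δ := lt_min (by linarith) (by linarith)
  have hδ1 : c + δ ≤ y₁ := by
    have := min_le_right (ε / 2) ((y₁ - c) / 2); rw [hδdef]; linarith [this]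
  have hJsub : Set.Icc c (c + δ) ⊆ Set.Icc y₂ y₁ := by
    intro x hx; exact ⟨le_trans hc2.le hx.1, le_trans hx.2 hδ1⟩
  have hupos : ∀ x ∈ Set.Icc c (c + δ), 0 < u x := by
    intro x hx
    apply hball
    rw [Real.dist_eq, abs_lt]
    have hdle : δ ≤ ε / 2 := by rw [hδdef]; exact min_le_left _ _
    have hx1 := hx.1
    have hx2 := hx.2
    constructor
    · linarith
    · linarith
  -- h is strictly increasing on [c, c+δ]
  have hIooN : ∀ x ∈ Set.Ioo c (c + δ), Set.Icc y₂ y₁ ∈ nhds x := by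
    intro x hx
    exact Icc_mem_nhds (lt_trans hc2 hx.1) (lt_of_lt_of_le hx.2 hδ1)
  have hhmono : StrictMonoOn h (Set.Icc c (c + δ)) := by
    apply strictMonoOn_of_hasDerivWithinAt_pos (convex_Icc _ _)
      (hhcont.mono hJsub) (f' := fun x => u x * w x * (k ^ 2 - q x))
    · intro x hx
      rw [interior_Icc] at hx
      exact (((hh x (hJsub ⟨hx.1.le, hx.2.le⟩)).hasDerivAt
        (hIooN x hx)).hasDerivWithinAt)
    · intro x hx
      rw [interior_Icc] at hx
      have hx' : x ∈ Set.Icc c (c + δ) := ⟨hx.1.le, hx.2.le⟩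
      have h1 := hupos x hx'
      have h2 := hw_pos x (hJsub hx')
      have h3 := hq_lt x
      have h4 : 0 < k ^ 2 - q x := by linarith
      exact mul_pos (mul_pos h1 h2) h4
  have hhpos : ∀ x ∈ Set.Ioc c (c + δ), 0 < h x := by
    intro x hx
    have := hhmono (Set.left_mem_Icc.mpr (by linarith)) ⟨hx.1.le, hx.2⟩ hx.1
    rw [hhc] at this; exact this
  -- g is strictly increasing on [c, c+δ]
  have hgmono : StrictMonoOn g (Set.Icc c (c + δ)) := by
    apply strictMonoOn_of_hasDerivWithinAt_pos (convex_Icc _ _)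
      (hgcont.mono hJsub) (f' := fun x => h x / (w x) ^ 2)
    · intro x hx
      rw [interior_Icc] at hx
      have hx' : x ∈ Set.Icc c (c + δ) := ⟨hx.1.le, hx.2.le⟩
      have hwx := hw_pos x (hJsub hx')
      have hux_at : HasDerivAt u (u' x) x := (hu x (hJsub hx')).hasDerivAt (hIooN x hx)
      exact ((hux_at.div (hw x) hwx.ne').hasDerivWithinAt)
    · intro x hx
      rw [interior_Icc] at hx
      have hx' : x ∈ Set.Icc c (c + δ) := ⟨hx.1.le, hx.2.le⟩
      have hwx := hw_pos x (hJsub hx')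
      have h1 := hhpos x ⟨hx.1, hx.2.le⟩
      positivity
  have hfinal : g c < g (c + δ) :=
    hgmono (Set.left_mem_Icc.mpr (by linarith)) (Set.right_mem_Icc.mpr (by linarith))
      (by linarith)
  have := hcmax (hJsub (Set.right_mem_Icc.mpr (by linarith)))
  exact absurd hfinal (not_lt.mpr this)

/-- Triviality of the rotationally invariant Dirichlet Jacobi kernel on short catenoidal
annuli: if `y₁ − y₂ ≤ 2a` and `u` solves `u'' + (2/a²)·sech²((y − b)/a)·u = 0` on
`[y₂, y₁]` with `u(y₁) = u(y₂) = 0`, then `u ≡ 0` on `[y₂, y₁]`. -/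
theorem catenoid_dirichlet_kernel_trivial (a b y₁ y₂ : ℝ) (ha : 0 < a)
    (hy : y₂ < y₁) (hgap : y₁ - y₂ ≤ 2 * a)
    (u u' u'' : ℝ → ℝ)
    (hu : ∀ y ∈ Set.Icc y₂ y₁, HasDerivWithinAt u (u' y) (Set.Icc y₂ y₁) y)
    (hu' : ∀ y ∈ Set.Icc y₂ y₁, HasDerivWithinAt u' (u'' y) (Set.Icc y₂ y₁) y)
    (hode : ∀ y ∈ Set.Icc y₂ y₁,
      u'' y + (2 / a ^ 2) * (1 / Real.cosh ((y - b) / a)) ^ 2 * u y = 0)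
    (hb1 : u y₁ = 0) (hb2 : u y₂ = 0) :
    ∀ y ∈ Set.Icc y₂ y₁, u y = 0 := by
  have h1 := catenoid_key a b y₁ y₂ ha hy hgap u u' u'' hu hu' hode hb1 hb2
  have h2 := catenoid_key a b y₁ y₂ ha hy hgap (fun y => -u y) (fun y => -u' y)
    (fun y => -u'' y) (fun y hyI => (hu y hyI).neg) (fun y hyI => (hu' y hyI).neg)
    (fun y hyI => by have := hode y hyI; ring_nf; ring_nf at this; linarith)
    (by simp [hb1]) (by simp [hb2])
  intro y hyI
  have ha1 := h1 y hyI
  have ha2 := h2 y hyI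
  linarith
end

section
/- Define F : (0, π) → ℝ by F(t) = sgn(t − π/2) · sin(t) · arcosh(1/sin t) (so F(π/2) = 0). Then F is differentiable at t = π/2 and F'(π/2) = 1; in particular F'(π/2) > 0. -/
open Real

lemma arcosh_eq (t : ℝ) (hs : 0 < Real.sin t) :
    _root_.arcosh (1 / Real.sin t) = Real.log ((1 + |Real.cos t|) / Real.sin t) := by
  unfold _root_.arcosh
  have h1 : ((1 : ℝ) / Real.sin t) ^ 2 - 1 = (Real.cos t / Real.sin t) ^ 2 := by
    have := Real.sin_sq_add_cos_sq t
    field_simp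
    nlinarith
  rw [h1, Real.sqrt_sq_eq_abs, abs_div, abs_of_pos hs]
  ring_nf

lemma G_eq (t : ℝ) (ht0 : 0 < t) (htπ : t < π) :
    Real.sign (t - π / 2) * Real.sin t * _root_.arcosh (1 / Real.sin t)
      = Real.sin t * (Real.log (1 - Real.cos t) - Real.log (Real.sin t)) := by
  have hs : 0 < Real.sin t := Real.sin_pos_of_pos_of_lt_pi ht0 htπ
  rw [arcosh_eq t hs]
  rcases lt_trichotomy t (π / 2) with h | h | h
  · -- cos t > 0, sign = -1
    have hc : 0 < Real.cos t := Real.cos_pos_of_mem_Ioo ⟨by linarith [Real.pi_pos], h⟩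
    rw [Real.sign_of_neg (by linarith), abs_of_pos hc]
    have h1c : (0:ℝ) < 1 - Real.cos t := by nlinarith [Real.sin_sq_add_cos_sq t]
    rw [Real.log_div (by positivity) hs.ne']
    have key : Real.log (1 + Real.cos t) = 2 * Real.log (Real.sin t) - Real.log (1 - Real.cos t) := by
      have : (1 + Real.cos t) = Real.sin t ^ 2 / (1 - Real.cos t) := by
        field_simp
        nlinarith [Real.sin_sq_add_cos_sq t]
      rw [this, Real.log_div (by positivity) h1c.ne', Real.log_pow]
      push_cast; ring
    rw [key]; ring
  · subst h
    simp [Real.sign_zero, Real.cos_pi_div_two, Real.sin_pi_div_two]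
  · -- cos t < 0, sign = 1
    have hc : Real.cos t < 0 :=
      Real.cos_neg_of_pi_div_two_lt_of_lt h (by linarith [Real.pi_pos])
    rw [Real.sign_of_pos (by linarith), abs_of_neg hc]
    rw [Real.log_div (by nlinarith) hs.ne']
    ring_nf

/-- The function `F(t) = sgn(t − π/2)·sin t·arcosh(1/sin t)` is differentiable at
`t = π/2` with `F'(π/2) = 1 > 0`. -/
theorem sign_sin_arcosh_hasDerivAt :
    HasDerivAt
        (fun t : ℝ => Real.sign (t - π / 2) * Real.sin t * _root_.arcosh (1 / Real.sin t))
        1 (π / 2) ∧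
      0 < deriv
        (fun t : ℝ => Real.sign (t - π / 2) * Real.sin t * _root_.arcosh (1 / Real.sin t))
        (π / 2) := by
  have hG : HasDerivAt
      (fun t : ℝ => Real.sin t * (Real.log (1 - Real.cos t) - Real.log (Real.sin t)))
      1 (π / 2) := by
    have hsin : HasDerivAt Real.sin (Real.cos (π / 2)) (π / 2) := Real.hasDerivAt_sin _
    have hcos : HasDerivAt Real.cos (-Real.sin (π / 2)) (π / 2) := Real.hasDerivAt_cos _
    have h1 : HasDerivAt (fun t : ℝ => 1 - Real.cos t) (Real.sin (π / 2)) (π / 2) := by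
      simpa using hcos.const_sub (1:ℝ)
    have hlog1 : HasDerivAt (fun t : ℝ => Real.log (1 - Real.cos t))
        (Real.sin (π / 2) / (1 - Real.cos (π / 2))) (π / 2) := by
      refine h1.log ?_
      rw [Real.cos_pi_div_two]; norm_num
    have hlog2 : HasDerivAt (fun t : ℝ => Real.log (Real.sin t))
        (Real.cos (π / 2) / Real.sin (π / 2)) (π / 2) := by
      refine hsin.log ?_
      rw [Real.sin_pi_div_two]; norm_num
    have := hsin.mul (hlog1.sub hlog2)
    refine this.congr_deriv ?_
    rw [Real.sin_pi_div_two, Real.cos_pi_div_two]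
    norm_num
  have hmem : Set.Ioo (0:ℝ) π ∈ nhds (π / 2) :=
    isOpen_Ioo.mem_nhds ⟨by positivity, by linarith [Real.pi_pos]⟩
  have heq : (fun t : ℝ => Real.sign (t - π / 2) * Real.sin t * _root_.arcosh (1 / Real.sin t))
      =ᶠ[nhds (π / 2)]
      (fun t : ℝ => Real.sin t * (Real.log (1 - Real.cos t) - Real.log (Real.sin t))) := by
    filter_upwards [hmem] with t ht
    exact G_eq t ht.1 ht.2
  have hF : HasDerivAt
      (fun t : ℝ => Real.sign (t - π / 2) * Real.sin t * _root_.arcosh (1 / Real.sin t))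
      1 (π / 2) := hG.congr_of_eventuallyEq heq
  exact ⟨hF, by rw [hF.deriv]; norm_num⟩
end

section
/- Let a > 0, b ∈ ℝ, β₀ ∈ (0, π), and α ∈ (−π/2, π/2) with α + β₀ ∈ (0, π). Let J ⊆ (0, π) be an open interval containing β₀ and r : J → (0, ∞) a differentiable function satisfying a·cosh((r(β)·cos β − b)/a) = r(β)·sin β for all β ∈ J, with r(β₀) = 1 and sinh((cos β₀ − b)/a) = −cot(α + β₀). Then r'(β₀) = −tan α; equivalently, the function v := −r'/r satisfies v(β₀) = tan α. -/
open Real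

/-- Boundary condition `v(β₀) = tan α` of Lemma 2.6(iii): if the radial graph
`β ↦ r(β)·(sin β, cos β)` parametrizes the catenary `x = a·cosh((y − b)/a)` near `β₀`,
with `r(β₀) = 1` and `sinh((cos β₀ − b)/a) = −cot(α + β₀)`, then `r'(β₀) = −tan α`. -/
theorem radial_graph_boundary_slope (a b β₀ α : ℝ) (ha : 0 < a)
    (hβ₀ : β₀ ∈ Set.Ioo 0 π) (hα : α ∈ Set.Ioo (-(π / 2)) (π / 2))
    (hαβ : α + β₀ ∈ Set.Ioo 0 π)
    (J : Set ℝ) (hJ : ∃ c d : ℝ, J = Set.Ioo c d) (hJsub : J ⊆ Set.Ioo 0 π)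
    (hβ₀J : β₀ ∈ J)
    (r r' : ℝ → ℝ)
    (hrpos : ∀ β ∈ J, 0 < r β)
    (hr : ∀ β ∈ J, HasDerivAt r (r' β) β)
    (hcat : ∀ β ∈ J, a * Real.cosh ((r β * Real.cos β - b) / a) = r β * Real.sin β)
    (hr0 : r β₀ = 1)
    (hangle : Real.sinh ((Real.cos β₀ - b) / a) = -Real.cot (α + β₀)) :
    r' β₀ = -Real.tan α := by
  obtain ⟨c, d, rfl⟩ := hJ
  have ha' : a ≠ 0 := ne_of_gt ha
  -- derivative of LHS minus RHS of the catenary relation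
  have h1 : HasDerivAt (fun β => r β * Real.cos β)
      (r' β₀ * Real.cos β₀ + r β₀ * (-Real.sin β₀)) β₀ :=
    (hr β₀ hβ₀J).mul (Real.hasDerivAt_cos β₀)
  have h2 : HasDerivAt (fun β => (r β * Real.cos β - b) / a)
      ((r' β₀ * Real.cos β₀ + r β₀ * (-Real.sin β₀)) / a) β₀ :=
    (h1.sub_const b).div_const a
  have h3 : HasDerivAt (fun β => a * Real.cosh ((r β * Real.cos β - b) / a))
      (a * (Real.sinh ((r β₀ * Real.cos β₀ - b) / a) *
        ((r' β₀ * Real.cos β₀ + r β₀ * (-Real.sin β₀)) / a))) β₀ :=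
    (h2.cosh).const_mul a
  have h4 : HasDerivAt (fun β => r β * Real.sin β)
      (r' β₀ * Real.sin β₀ + r β₀ * Real.cos β₀) β₀ :=
    (hr β₀ hβ₀J).mul (Real.hasDerivAt_sin β₀)
  have hF : HasDerivAt
      (fun β => a * Real.cosh ((r β * Real.cos β - b) / a) - r β * Real.sin β)
      (a * (Real.sinh ((r β₀ * Real.cos β₀ - b) / a) *
        ((r' β₀ * Real.cos β₀ + r β₀ * (-Real.sin β₀)) / a)) -
       (r' β₀ * Real.sin β₀ + r β₀ * Real.cos β₀)) β₀ := h3.sub h4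
  have hev : (fun β => a * Real.cosh ((r β * Real.cos β - b) / a) - r β * Real.sin β)
      =ᶠ[nhds β₀] (fun _ => (0 : ℝ)) := by
    filter_upwards [isOpen_Ioo.mem_nhds hβ₀J] with β hβ
    simp [hcat β hβ]
  have hzero : a * (Real.sinh ((r β₀ * Real.cos β₀ - b) / a) *
        ((r' β₀ * Real.cos β₀ + r β₀ * (-Real.sin β₀)) / a)) -
       (r' β₀ * Real.sin β₀ + r β₀ * Real.cos β₀) = 0 := by
    have := (hF.congr_of_eventuallyEq hev.symm).unique (hasDerivAt_const β₀ 0)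
    linarith [this]
  rw [hr0] at hzero
  have hkey : Real.sinh ((Real.cos β₀ - b) / a) *
      (r' β₀ * Real.cos β₀ - Real.sin β₀) =
      r' β₀ * Real.sin β₀ + Real.cos β₀ := by
    field_simp at hzero
    nlinarith [hzero]
  have hs : 0 < Real.sin (α + β₀) := Real.sin_pos_of_pos_of_lt_pi hαβ.1 hαβ.2
  have hca : 0 < Real.cos α := Real.cos_pos_of_mem_Ioo hα
  rw [hangle, Real.cot_eq_cos_div_sin] at hkey
  -- multiply through by sin (α + β₀) and expand
  have hkey2 : -(Real.cos (α + β₀) * (r' β₀ * Real.cos β₀ - Real.sin β₀)) =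
      (r' β₀ * Real.sin β₀ + Real.cos β₀) * Real.sin (α + β₀) := by
    field_simp at hkey
    linarith [hkey]
  rw [Real.cos_add, Real.sin_add] at hkey2
  have hpy : Real.sin β₀ ^ 2 + Real.cos β₀ ^ 2 = 1 := Real.sin_sq_add_cos_sq β₀
  have hlin : r' β₀ * Real.cos α + Real.sin α = 0 := by nlinarith [hkey2, hpy]
  rw [Real.tan_eq_sin_div_cos]
  field_simp
  linarith [hlin]
end

section
/- There exists a unique β ∈ (π/4, 2π/7) such that, setting a := sin β · sin(2β) and b := cos β − a · arcosh(1/sin(2β)), one has a·cosh(b/a) = 1. -/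
open Real

/-- The auxiliary profile function. -/
noncomputable def hfun (v : ℝ) : ℝ :=
  v * (1 - v ^ 2) * Real.exp (1 / (2 * v ^ 2)) + v ^ 3 * Real.exp (-(1 / (2 * v ^ 2)))

lemma hfun_hasDerivAt {v : ℝ} (hv : v ≠ 0) :
    HasDerivAt hfun
      ((1 - 3 * v ^ 2) * Real.exp (1 / (2 * v ^ 2)) +
        v * (1 - v ^ 2) * (Real.exp (1 / (2 * v ^ 2)) * (-(1 / v ^ 3))) +
        ((3 * v ^ 2) * Real.exp (-(1 / (2 * v ^ 2))) +
          v ^ 3 * (Real.exp (-(1 / (2 * v ^ 2))) * (1 / v ^ 3)))) v := by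
  have h2v : (2 * v ^ 2) ≠ 0 := by positivity
  have hw : HasDerivAt (fun v : ℝ => 1 / (2 * v ^ 2)) (-(1 / v ^ 3)) v := by
    have h1 : HasDerivAt (fun v : ℝ => 2 * v ^ 2) (4 * v) v := by
      have := (hasDerivAt_pow 2 v).const_mul (2:ℝ)
      refine this.congr_deriv ?_
      ring
    have h2 := h1.inv h2v
    have : -(4 * v) / (2 * v ^ 2) ^ 2 = -(1 / v ^ 3) := by
      field_simp; ring
    refine (h2.congr_deriv this).congr_of_eventuallyEq ?_
    exact Filter.Eventually.of_forall (fun x => by simp [one_div])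
  have e1 : HasDerivAt (fun v : ℝ => Real.exp (1 / (2 * v ^ 2)))
      (Real.exp (1 / (2 * v ^ 2)) * (-(1 / v ^ 3))) v := hw.exp
  have e2 : HasDerivAt (fun v : ℝ => Real.exp (-(1 / (2 * v ^ 2))))
      (Real.exp (-(1 / (2 * v ^ 2))) * (1 / v ^ 3)) v := by
    simpa using hw.neg.exp
  have p1 : HasDerivAt (fun v : ℝ => v * (1 - v ^ 2)) (1 - 3 * v ^ 2) v := by
    have := (hasDerivAt_id v).mul ((hasDerivAt_const v (1:ℝ)).sub (hasDerivAt_pow 2 v))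
    refine this.congr_deriv ?_
    simp; ring
  have p3 : HasDerivAt (fun v : ℝ => v ^ 3) (3 * v ^ 2) v := by
    simpa using hasDerivAt_pow 3 v
  exact (p1.mul e1).add (p3.mul e2)

lemma hfun_deriv_neg {v : ℝ} (hv : v ∈ Set.Ioo (0:ℝ) 1) : deriv hfun v < 0 := by
  have hv0 : (0:ℝ) < v := hv.1
  have hv1 : v < 1 := hv.2
  rw [(hfun_hasDerivAt hv0.ne').deriv]
  set A := Real.exp (1 / (2 * v ^ 2)) with hA
  have hApos : 0 < A := Real.exp_pos _
  have hB : Real.exp (-(1 / (2 * v ^ 2))) = A⁻¹ := Real.exp_neg _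
  have hAA : A * A = Real.exp (1 / v ^ 2) := by
    rw [hA, ← Real.exp_add]
    congr 1
    field_simp
    ring
  have hA2 : 1 / v ^ 2 + 1 < A * A := by
    rw [hAA]
    exact Real.add_one_lt_exp (by positivity)
  have hA2' : 1 + v ^ 2 < (A * A) * v ^ 2 := by
    have := mul_lt_mul_of_pos_right hA2 (by positivity : (0:ℝ) < v ^ 2)
    calc 1 + v ^ 2 = (1 / v ^ 2 + 1) * v ^ 2 := by field_simp
    _ < (A * A) * v ^ 2 := this
  set D := (1 - 3 * v ^ 2) * A + v * (1 - v ^ 2) * (A * (-(1 / v ^ 3))) +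
      ((3 * v ^ 2) * Real.exp (-(1 / (2 * v ^ 2))) + v ^ 3 * (Real.exp (-(1 / (2 * v ^ 2))) * (1 / v ^ 3))) with hD
  have hDmul : D * (v ^ 2 * A) = (A * A) * (2 * v ^ 2 - 3 * v ^ 4 - 1) + 3 * v ^ 4 + v ^ 2 := by
    rw [hD, hB]
    field_simp
    ring
  have hpoly : (0:ℝ) < 3 * v ^ 4 - 2 * v ^ 2 + 1 := by nlinarith [sq_nonneg (v^2 - 1)]
  have hkey : (A * A) * (2 * v ^ 2 - 3 * v ^ 4 - 1) + 3 * v ^ 4 + v ^ 2 < 0 := by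
    nlinarith [mul_lt_mul_of_pos_right hA2' (by positivity : (0:ℝ) < 3 * v ^ 4 - 2 * v ^ 2 + 1),
      sq_nonneg v, mul_pos hv0 hv0]
  nlinarith [hDmul, hkey, mul_pos (mul_pos hv0 hv0) hApos]

lemma hfun_anti : StrictAntiOn hfun (Set.Ioo (0:ℝ) 1) := by
  apply strictAntiOn_of_deriv_neg (convex_Ioo 0 1)
  · intro x hx
    exact (hfun_hasDerivAt (ne_of_gt hx.1)).continuousAt.continuousWithinAt
  · intro x hx
    rw [interior_Ioo] at hx
    exact hfun_deriv_neg hx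

lemma pi47 : π / 4 < 2 * π / 7 ∧ 2 * π / 7 < π / 2 := by
  constructor <;> nlinarith [pi_pos]

lemma key_rewrite {β : ℝ} (hβ : β ∈ Set.Ioo (π / 4) (2 * π / 7)) :
    (Real.sin β * Real.sin (2 * β)) *
        Real.cosh ((Real.cos β -
            Real.sin β * Real.sin (2 * β) * _root_.arcosh (1 / Real.sin (2 * β))) /
          (Real.sin β * Real.sin (2 * β))) = hfun (Real.sin β) := by
  have hβ1 : π / 4 < β := hβ.1
  have hβ2 : β < 2 * π / 7 := hβ.2
  have hpi := pi_pos
  have hsin : 0 < Real.sin β := Real.sin_pos_of_pos_of_lt_pi (by linarith) (by nlinarith)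
  have hcos : 0 < Real.cos β := Real.cos_pos_of_mem_Ioo ⟨by linarith, by nlinarith⟩
  have hs2 : 0 < Real.sin (2 * β) := Real.sin_pos_of_pos_of_lt_pi (by linarith) (by nlinarith)
  have hc2 : Real.cos (2 * β) ≤ 0 :=
    Real.cos_nonpos_of_pi_div_two_le_of_le (by nlinarith) (by nlinarith)
  have hpy : Real.sin β ^ 2 + Real.cos β ^ 2 = 1 := Real.sin_sq_add_cos_sq β
  have hpy2 : Real.sin (2 * β) ^ 2 + Real.cos (2 * β) ^ 2 = 1 := Real.sin_sq_add_cos_sq (2 * β)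
  -- arcosh (1 / sin 2β) = log (sin β / cos β)
  have h1 : (1 / Real.sin (2 * β)) ^ 2 - 1 = (-Real.cos (2 * β) / Real.sin (2 * β)) ^ 2 := by
    field_simp
    linarith
  have h2 : Real.sqrt ((1 / Real.sin (2 * β)) ^ 2 - 1) = -Real.cos (2 * β) / Real.sin (2 * β) := by
    rw [h1, Real.sqrt_sq (div_nonneg (by linarith) hs2.le)]
  have harc : _root_.arcosh (1 / Real.sin (2 * β)) = Real.log (Real.sin β / Real.cos β) := by
    unfold _root_.arcosh
    rw [h2]
    congr 1
    rw [Real.sin_two_mul, Real.cos_two_mul]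
    field_simp
    ring_nf
    nlinarith [hpy]
  have hLpos : 0 < Real.sin β / Real.cos β := by positivity
  have hexpL : Real.exp (Real.log (Real.sin β / Real.cos β)) = Real.sin β / Real.cos β :=
    Real.exp_log hLpos
  rw [harc, Real.cosh_eq]
  have hs2eq : Real.sin (2 * β) = 2 * Real.sin β * Real.cos β := Real.sin_two_mul β
  have hD : (Real.cos β - Real.sin β * Real.sin (2 * β) * Real.log (Real.sin β / Real.cos β)) /
      (Real.sin β * Real.sin (2 * β)) =
      1 / (2 * Real.sin β ^ 2) - Real.log (Real.sin β / Real.cos β) := by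
    rw [hs2eq]
    field_simp
  rw [hD, Real.exp_sub, hexpL, neg_sub, Real.exp_sub, hexpL]
  have hcsq : 1 - Real.sin β ^ 2 = Real.cos β ^ 2 := by linarith
  unfold hfun
  rw [hcsq, hs2eq, Real.exp_neg]
  have hE : 0 < Real.exp (1 / (2 * Real.sin β ^ 2)) := Real.exp_pos _
  field_simp

lemma left_val : 1 < hfun (Real.sin (π / 4)) := by
  rw [Real.sin_pi_div_four]
  unfold hfun
  have hs : Real.sqrt 2 * Real.sqrt 2 = 2 := Real.mul_self_sqrt (by norm_num)
  have hs0 : (0:ℝ) ≤ Real.sqrt 2 := Real.sqrt_nonneg 2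
  have hsq : (Real.sqrt 2 / 2) ^ 2 = 1 / 2 := by
    rw [div_pow, sq]
    rw [hs]; norm_num
  have harg : 1 / (2 * (Real.sqrt 2 / 2) ^ 2) = 1 := by rw [hsq]; norm_num
  rw [harg]
  have hE1 : (2.7182818283 : ℝ) < Real.exp 1 := Real.exp_one_gt_d9
  have hE2 : Real.exp 1 < 2.7182818286 := Real.exp_one_lt_d9
  have hEI : Real.exp 1 * Real.exp (-1) = 1 := by
    rw [← Real.exp_add]; norm_num
  have hI : Real.exp (-1) > 0.3678 := by nlinarith [Real.exp_pos (-1 : ℝ)]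
  have hs14 : Real.sqrt 2 > 1.414 := by nlinarith
  have hc3 : (Real.sqrt 2 / 2) ^ 3 = Real.sqrt 2 / 4 := by
    rw [div_pow, pow_succ, sq, hs]; ring
  rw [hc3]
  nlinarith [Real.exp_pos (1:ℝ)]

lemma sin27_gt : (19/25 : ℝ) < Real.sin (2 * π / 7) := by
  have h : Real.sin (2 * π / 7) = Real.cos (3 * π / 14) := by
    rw [← Real.cos_pi_div_two_sub]
    congr 1
    ring
  rw [h]
  set x : ℝ := 3 * π / 14 with hx
  have hpi1 : (3.141592 : ℝ) < π := Real.pi_gt_d6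
  have hpi2 : π < 3.141593 := Real.pi_lt_d6
  have hx1 : x < 0.6733 := by rw [hx]; nlinarith
  have hx0 : 0 < x := by rw [hx]; nlinarith
  have habs : |x| ≤ 1 := by rw [abs_of_pos hx0]; linarith
  have hb := Real.cos_bound habs
  rw [abs_of_pos hx0] at hb
  rw [abs_sub_le_iff] at hb
  have hx2 : x^2 < 0.4534 := by nlinarith
  have hx4 : x^4 < 0.2056 := by nlinarith [sq_nonneg x, sq_nonneg (x^2 - 0.4534)]
  nlinarith [hb.2, hx2, hx4]

lemma sin27_lt_one : Real.sin (2 * π / 7) < 1 := by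
  have hpi := pi_pos
  have hmem1 : (2 * π / 7) ∈ Set.Icc (-(π/2)) (π/2) := ⟨by nlinarith, by nlinarith⟩
  have hmem2 : (π/2) ∈ Set.Icc (-(π/2)) (π/2) := ⟨by nlinarith, le_refl _⟩
  have := Real.strictMonoOn_sin hmem1 hmem2 (by nlinarith)
  simpa using this

lemma exp_ub {t : ℝ} (ht0 : 0 < t) (ht1 : t < 1) : Real.exp t < 1 / (1 - t) := by
  have h := Real.add_one_lt_exp (x := -t) (by linarith)
  rw [Real.exp_neg] at h
  have hE := Real.exp_pos t
  have h2 := mul_lt_mul_of_pos_left h hE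
  rw [mul_inv_cancel₀ hE.ne'] at h2
  rw [lt_div_iff₀ (by linarith)]
  nlinarith [h2]

lemma right_val : hfun (Real.sin (2 * π / 7)) < 1 := by
  have h1 : hfun (Real.sin (2 * π / 7)) < hfun (19/25 : ℝ) := by
    apply hfun_anti (by norm_num) ⟨by nlinarith [sin27_gt], sin27_lt_one⟩ sin27_gt
  refine h1.trans_le ?_
  unfold hfun
  have harg : 1 / (2 * ((19:ℝ)/25) ^ 2) = 625/722 := by norm_num
  rw [harg]
  have hsplit : (625/722 : ℝ) = (16 : ℕ) * (625/11552) := by norm_num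
  have hpow : Real.exp (625/722) = Real.exp (625/11552) ^ 16 := by
    rw [hsplit, Real.exp_nat_mul]
  have hub : Real.exp (625/11552 : ℝ) < 11552/10927 := by
    have h := exp_ub (t := 625/11552) (by norm_num) (by norm_num)
    rw [show (1:ℝ) - 625/11552 = 10927/11552 by norm_num] at h
    rw [one_div, inv_div] at h
    exact h
  have hlb : (12177/11552 : ℝ) < Real.exp (625/11552) := by
    have := Real.add_one_lt_exp (x := (625/11552 : ℝ)) (by norm_num)
    linarith
  have hEub : Real.exp (625/722 : ℝ) < (11552/10927 : ℝ)^16 := by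
    rw [hpow]
    exact pow_lt_pow_left₀ hub (Real.exp_pos _).le (by norm_num)
  have hElb : ((12177/11552 : ℝ))^16 < Real.exp (625/722) := by
    rw [hpow]
    exact pow_lt_pow_left₀ hlb (by norm_num) (by norm_num)
  have hIub : Real.exp (-(625/722 : ℝ)) < ((12177/11552 : ℝ)^16)⁻¹ := by
    rw [Real.exp_neg]
    exact inv_strictAnti₀ (by positivity) hElb
  have h2 : (19/25 : ℝ) * (1 - (19/25)^2) * Real.exp (625/722) <
      (19/25) * (1 - (19/25)^2) * ((11552/10927 : ℝ)^16) := by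
    apply mul_lt_mul_of_pos_left hEub (by norm_num)
  have h3 : ((19:ℝ)/25)^3 * Real.exp (-(625/722 : ℝ)) <
      ((19:ℝ)/25)^3 * ((12177/11552 : ℝ)^16)⁻¹ := by
    apply mul_lt_mul_of_pos_left hIub (by norm_num)
  have hfinal : (19/25 : ℝ) * (1 - (19/25)^2) * ((11552/10927 : ℝ)^16) +
      ((19:ℝ)/25)^3 * ((12177/11552 : ℝ)^16)⁻¹ ≤ 1 := by
    norm_num
  linarith

/-- Existence and uniqueness of the first latitude of the balanced configuration
`𝒲[0:3]`: there is a unique `β ∈ (π/4, 2π/7)` such that, with `a = sin β·sin 2β` and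
`b = cos β − a·arcosh(1/sin 2β)`, the catenary `x = a·cosh((y − b)/a)` passes through
`(1, 0)`, i.e. `a·cosh(b/a) = 1`. -/
theorem balanced_order3_first_latitude :
    ∃! β : ℝ, β ∈ Set.Ioo (π / 4) (2 * π / 7) ∧
      (Real.sin β * Real.sin (2 * β)) *
        Real.cosh ((Real.cos β -
            Real.sin β * Real.sin (2 * β) * _root_.arcosh (1 / Real.sin (2 * β))) /
          (Real.sin β * Real.sin (2 * β))) = 1 := by
  have hpi := pi_pos
  have hab : π / 4 ≤ 2 * π / 7 := by nlinarith
  have hsinmem : ∀ β ∈ Set.Icc (π / 4) (2 * π / 7), Real.sin β ∈ Set.Ioo (0:ℝ) 1 := by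
    intro β hβ
    constructor
    · exact Real.sin_pos_of_pos_of_lt_pi (by nlinarith [hβ.1]) (by nlinarith [hβ.2])
    · have hmem1 : β ∈ Set.Icc (-(π/2)) (π/2) := ⟨by nlinarith [hβ.1], by nlinarith [hβ.2]⟩
      have hmem2 : (π/2) ∈ Set.Icc (-(π/2)) (π/2) := ⟨by nlinarith, le_refl _⟩
      have := Real.strictMonoOn_sin hmem1 hmem2 (by nlinarith [hβ.2])
      simpa using this
  have hcont : ContinuousOn (fun β => hfun (Real.sin β)) (Set.Icc (π / 4) (2 * π / 7)) := by
    intro β hβ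
    have hv := hsinmem β hβ
    have h1 : ContinuousAt hfun (Real.sin β) := (hfun_hasDerivAt (ne_of_gt hv.1)).continuousAt
    exact (h1.comp Real.continuous_sin.continuousAt).continuousWithinAt
  have hanti : StrictAntiOn (fun β => hfun (Real.sin β)) (Set.Icc (π / 4) (2 * π / 7)) := by
    intro x hx y hy hxy
    have hsx := hsinmem x hx
    have hsy := hsinmem y hy
    have hmx : x ∈ Set.Icc (-(π/2)) (π/2) := ⟨by nlinarith [hx.1], by nlinarith [hx.2]⟩
    have hmy : y ∈ Set.Icc (-(π/2)) (π/2) := ⟨by nlinarith [hy.1], by nlinarith [hy.2]⟩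
    have hlt : Real.sin x < Real.sin y := Real.strictMonoOn_sin hmx hmy hxy
    exact hfun_anti hsx hsy hlt
  have hmem : (1:ℝ) ∈ Set.Icc (hfun (Real.sin (2 * π / 7))) (hfun (Real.sin (π / 4))) :=
    ⟨right_val.le, left_val.le⟩
  obtain ⟨β, hβmem, hβval⟩ := intermediate_value_Icc' hab hcont hmem
  simp only at hβval
  have hβIoo : β ∈ Set.Ioo (π / 4) (2 * π / 7) := by
    constructor
    · rcases eq_or_lt_of_le hβmem.1 with h | h
      · exfalso
        rw [← h] at hβval
        have := left_val
        linarith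
      · exact h
    · rcases eq_or_lt_of_le hβmem.2 with h | h
      · exfalso
        rw [h] at hβval
        have := right_val
        linarith
      · exact h
  refine ⟨β, ⟨hβIoo, ?_⟩, ?_⟩
  · rw [key_rewrite hβIoo]
    exact hβval
  · rintro y ⟨hyIoo, hyval⟩
    rw [key_rewrite hyIoo] at hyval
    have h1 : hfun (Real.sin y) = hfun (Real.sin β) := by rw [hβval, hyval]
    exact hanti.injOn (Set.Ioo_subset_Icc_self hyIoo) (Set.Ioo_subset_Icc_self hβIoo) h1
end
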